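/- arXiv:0705.3458 — 3 statements merged into one kernel-verified Lean document; each statement's English description precedes it below -/
import Mathlib

section
/- Let Γ be a connected ribbon graph and define q(Γ; t, Y) = C(Γ; 1, Y, tY⁻²), where C is the Bollobás–Riordan polynomial. Then q(Γ; t, Y) is a polynomial in t and Y (i.e., all Y-exponents are nonnegative). -/
open Equiv

noncomputable section

/-- Number of orbits of the map `f` on `α` (the equivalence generated by `i ~ f i`). -/
def orbCountOf {α : Type*} (f : α → α) : ℕ :=
  Nat.card (Quot (fun i j : α => j = f i))

/-- `x` lies on the arc of the cycle of `f` starting at `a` strictly before reaching `b`. -/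
def ReachesBefore {α : Type*} (f : α → α) (a x b : α) : Prop :=
  ∃ m : ℕ, f^[m] a = x ∧ ∀ k ≤ m, f^[k] a ≠ b

/-- The chords `{a,b}` and `{c,d}` of the cycle parametrized by `f` intersect:
exactly one of `c`, `d` lies on the arc from `a` to `b`. -/
def ChordsCross {α : Type*} (f : α → α) (a b c d : α) : Prop :=
  ¬ (ReachesBefore f a c b ↔ ReachesBefore f a d b)

/-- A combinatorial oriented ribbon graph on `2 * n` half-edges, given by a vertex
permutation `σ0` and a fixed-point free involution `σ1` pairing the half-edges
into edges.  Vertices, edges and faces are the orbits of `σ0`, `σ1`, `σ2 = (σ0 σ1)⁻¹`. -/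
structure RibbonGraph (n : ℕ) where
  σ0 : Perm (Fin (2 * n))
  σ1 : Perm (Fin (2 * n))
  invol : σ1 * σ1 = 1
  fixfree : ∀ i, σ1 i ≠ i

namespace RibbonGraph

variable {n : ℕ} (Γ : RibbonGraph n)

/-- The face permutation `σ2 = (σ0 σ1)⁻¹`, so that `σ0 σ1 σ2 = 1`. -/
def σ2 : Perm (Fin (2 * n)) := (Γ.σ0 * Γ.σ1)⁻¹

/-- `Γ` is connected iff the group generated by `σ0, σ1` acts transitively on half-edges. -/
def Connected : Prop :=
  ∀ i j : Fin (2 * n), ∃ g ∈ Subgroup.closure {Γ.σ0, Γ.σ1}, g i = j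

/-- A set `A` of half-edges determines a spanning ribbon subgraph iff it is closed
under the edge involution `σ1`. -/
def Closed (A : Finset (Fin (2 * n))) : Prop := ∀ i ∈ A, Γ.σ1 i ∈ A

/-- The number of vertices (orbits of `σ0`). -/
def vCount : ℕ := orbCountOf Γ.σ0

/-- The number of edges of the spanning subgraph with half-edge set `A`. -/
def eCount (_Γ : RibbonGraph n) (A : Finset (Fin (2 * n))) : ℕ := A.card / 2

/-- Relation whose equivalence classes are the connected components of the spanning
subgraph with half-edge set `A`. -/
def compRel (A : Finset (Fin (2 * n))) (i j : Fin (2 * n)) : Prop :=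
  j = Γ.σ0 i ∨ (i ∈ A ∧ j = Γ.σ1 i)

/-- The number of connected components of the spanning subgraph `A`. -/
def kComp (A : Finset (Fin (2 * n))) : ℕ := Nat.card (Quot (Γ.compRel A))

/-- The boundary map of a regular neighborhood of the spanning subgraph `A` on the
surface of `Γ`: it is `σ0` on half-edges not in `A`, and `σ2⁻¹ = σ0 σ1` on half-edges
in `A`.  Its orbits are the boundary components (faces) of `A`. -/
def bdryMap (A : Finset (Fin (2 * n))) : Fin (2 * n) → Fin (2 * n) :=
  fun i => if i ∈ A then Γ.σ0 (Γ.σ1 i) else Γ.σ0 i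

/-- The number of faces (boundary components `|γ_A|`) of the spanning subgraph `A`. -/
def faces (A : Finset (Fin (2 * n))) : ℕ := orbCountOf (Γ.bdryMap A)

/-- The nullity `n(A) = e(A) - v(Γ) + k(A)` of the spanning subgraph `A`. -/
def nullity (A : Finset (Fin (2 * n))) : ℤ := (Γ.eCount A : ℤ) + Γ.kComp A - Γ.vCount

/-- Twice the genus of the spanning subgraph `A`:
`2 g(A) = 2 k(A) - v(Γ) + e(A) - f(A)`. -/
def twoGenus (A : Finset (Fin (2 * n))) : ℤ :=
  2 * (Γ.kComp A : ℤ) - Γ.vCount + Γ.eCount A - Γ.faces A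

/-- The nullity of `A`, as a natural number. -/
def nullNat (A : Finset (Fin (2 * n))) : ℕ := Γ.eCount A + Γ.kComp A - Γ.vCount

/-- The genus of `A`, as a natural number. -/
def genusNat (A : Finset (Fin (2 * n))) : ℕ :=
  (2 * Γ.kComp A + Γ.eCount A - Γ.vCount - Γ.faces A) / 2

/-- A quasi-tree: a connected spanning ribbon subgraph with exactly one face. -/
def IsQuasiTree (A : Finset (Fin (2 * n))) : Prop :=
  Γ.Closed A ∧ Γ.kComp A = 1 ∧ Γ.faces A = 1

/-- The order of the edge of the half-edge `i`: the minimum of its two half-edge labels. -/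
def edgeOrd (i : Fin (2 * n)) : ℕ := min i.1 (Γ.σ1 i).1

/-- The chords of the edges of `i` and `j` intersect in the ordered chord diagram `C_A`
of the boundary curve `γ_A`. -/
def Crosses (A : Finset (Fin (2 * n))) (i j : Fin (2 * n)) : Prop :=
  ChordsCross (Γ.bdryMap A) i (Γ.σ1 i) j (Γ.σ1 j)

/-- The edge of `i` is live with respect to the quasi-tree `A`: its chord in `C_A`
intersects no lower-ordered chord. -/
def Live (A : Finset (Fin (2 * n))) (i : Fin (2 * n)) : Prop :=
  ∀ j : Fin (2 * n), Γ.edgeOrd j < Γ.edgeOrd i → ¬ Γ.Crosses A i j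

open scoped Classical in
/-- The half-edge set `D(A)` of the internally dead edges of the quasi-tree `A`. -/
noncomputable def deadIn (A : Finset (Fin (2 * n))) : Finset (Fin (2 * n)) :=
  A.filter (fun i => ¬ Γ.Live A i)

open scoped Classical in
/-- The number of externally live edges `|E(A)|` of the quasi-tree `A`. -/
noncomputable def extLiveCount (A : Finset (Fin (2 * n))) : ℕ :=
  (Finset.univ.filter (fun i => i ∉ A ∧ Γ.Live A i)).card / 2

open scoped Classical in
/-- The number of internally live edges `|I(A)|` of the quasi-tree `A`. -/
noncomputable def intLiveCount (A : Finset (Fin (2 * n))) : ℕ :=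
  (A.filter (fun i => Γ.Live A i)).card / 2

open scoped Classical in
/-- The Bollobás–Riordan polynomial of `Γ`, via its spanning subgraph expansion
`C(Γ) = Σ_H (X-1)^(k(H)-1) Y^(n(H)) Z^(g(H))`. -/
noncomputable def BR (X Y Z : ℚ) : ℚ :=
  ∑ A ∈ Finset.univ.filter (fun A : Finset (Fin (2 * n)) => Γ.Closed A),
    (X - 1) ^ (Γ.kComp A - 1) * Y ^ Γ.nullNat A * Z ^ Γ.genusNat A

open scoped Classical in
/-- The set of quasi-trees of `Γ`. -/
noncomputable def quasiTrees : Finset (Finset (Fin (2 * n))) :=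
  Finset.univ.filter (fun A => Γ.IsQuasiTree A)

open scoped Classical in
/-- The Tutte polynomial of the graph `G_A` (vertices: the components of `D(A)`;
edges: the internally live edges of `A`), via its spanning subgraph expansion
`T(x,y) = Σ_W (x-1)^(k(W)-1) (y-1)^(n(W))`.  A spanning subgraph `W` of `G_A`
corresponds to a `σ1`-closed set `S` of internally live half-edges; then
`k(W) = k(D ∪ S)` and `n(W) = k(D ∪ S) + e(S) - k(D)`. -/
noncomputable def TutteGQ (A : Finset (Fin (2 * n))) (x y : ℚ) : ℚ :=
  ∑ S ∈ (A.filter (fun i => Γ.Live A i)).powerset.filter (fun S => Γ.Closed S),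
    (x - 1) ^ (Γ.kComp (Γ.deadIn A ∪ S) - 1) *
      (y - 1) ^ (Γ.kComp (Γ.deadIn A ∪ S) + Γ.eCount S - Γ.kComp (Γ.deadIn A))

/-- A partial resolution assigns `some true` / `some false` / `none` ( `*` )
to half-edges; it should be constant on edges. -/
def EdgeConst (ρ : Fin (2 * n) → Option Bool) : Prop := ∀ i, ρ (Γ.σ1 i) = ρ i

open scoped Classical in
/-- The half-edge set `H_ρ` of the partial resolution `ρ`. -/
noncomputable def Hset (_Γ : RibbonGraph n) (ρ : Fin (2 * n) → Option Bool) : Finset (Fin (2 * n)) :=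
  Finset.univ.filter (fun i => ρ i = some true)

/-- `ρ` is split: `f(H_ρ ∪ U) > 1` for every (σ1-closed) set `U` of unresolved edges. -/
def Split (ρ : Fin (2 * n) → Option Bool) : Prop :=
  ∀ U : Finset (Fin (2 * n)), (∀ i ∈ U, ρ i = none) → (∀ i ∈ U, Γ.σ1 i ∈ U) →
    1 < Γ.faces (Γ.Hset ρ ∪ U)

/-- Resolve the edge of `e` in `ρ` to the value `b`. -/
def resolveEdge (ρ : Fin (2 * n) → Option Bool) (e : Fin (2 * n)) (b : Bool) :
    Fin (2 * n) → Option Bool :=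
  fun i => if i = e ∨ i = Γ.σ1 e then some b else ρ i

/-- The unresolved edge `e` is nugatory in `ρ`: one of its two resolutions is split. -/
def Nugatory (ρ : Fin (2 * n) → Option Bool) (e : Fin (2 * n)) : Prop :=
  Γ.Split (Γ.resolveEdge ρ e false) ∨ Γ.Split (Γ.resolveEdge ρ e true)

/-- `Γ(ρ) = γ_ρ ∪ Int(ρ⁻¹(*))` is connected: the boundary components of `H_ρ`
together with the unresolved edges connect all half-edges. -/
def GammaConn (ρ : Fin (2 * n) → Option Bool) : Prop :=
  ∀ i j : Fin (2 * n),
    Relation.EqvGen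
      (fun x y => y = Γ.bdryMap (Γ.Hset ρ) x ∨ (ρ x = none ∧ y = Γ.σ1 x)) i j

/-- The partial resolution seen at the moment the edge of `e` is considered in the
resolution process: edges of higher order keep their value, the rest are unresolved. -/
def restrictAbove (ρ : Fin (2 * n) → Option Bool) (e : Fin (2 * n)) :
    Fin (2 * n) → Option Bool :=
  fun j => if Γ.edgeOrd e < Γ.edgeOrd j then ρ j else none

/-- `ρ` is a leaf of the binary resolution tree `𝒯`: edges are resolved in decreasing
order, an edge is left unresolved exactly when it is nugatory at its turn. -/
def IsLeaf (ρ : Fin (2 * n) → Option Bool) : Prop :=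
  Γ.EdgeConst ρ ∧
  (∀ i, ρ i = none → Γ.Nugatory (Γ.restrictAbove ρ i) i) ∧
  (∀ i, ρ i ≠ none → ¬ Γ.Nugatory (Γ.restrictAbove ρ i) i)

/-- The spanning subgraph `A` lies in the interval `[ρ]` of the Boolean lattice. -/
def MemInterval (_Γ : RibbonGraph n) (ρ : Fin (2 * n) → Option Bool) (A : Finset (Fin (2 * n))) : Prop :=
  ∀ i, (ρ i = some true → i ∈ A) ∧ (ρ i = some false → i ∉ A)

/-- The pair of half-edges of the edge of `i`. -/
def edgePair (i : Fin (2 * n)) : Finset (Fin (2 * n)) := {i, Γ.σ1 i}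

/-- For a spanning tree `A`, `j ∈ cut(A, i)` (equivalently `i ∈ cyc(A, j)`):
the edge of `j` reconnects `A` minus the edge of `i`. -/
def InCut (A : Finset (Fin (2 * n))) (i j : Fin (2 * n)) : Prop :=
  Γ.kComp ((A \ Γ.edgePair i) ∪ Γ.edgePair j) = 1

/-- Tutte's internal activity: `i ∈ A` is internally active iff it is the
lowest-ordered edge of its cut `cut(A, i)`. -/
def TutteIntActive (A : Finset (Fin (2 * n))) (i : Fin (2 * n)) : Prop :=
  i ∈ A ∧ ∀ j, j ∉ A → Γ.InCut A i j → Γ.edgeOrd i < Γ.edgeOrd j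

/-- Tutte's external activity: `j ∉ A` is externally active iff it is the
lowest-ordered edge of its cycle `cyc(A, j)`. -/
def TutteExtActive (A : Finset (Fin (2 * n))) (j : Fin (2 * n)) : Prop :=
  j ∉ A ∧ ∀ i ∈ A, Γ.InCut A i j → Γ.edgeOrd j < Γ.edgeOrd i

end RibbonGraph

end

/-- Any quotient of a nonempty finite type has positive `Nat.card`. -/
lemma orb_pos {α : Type*} [Finite α] [Nonempty α] (r : α → α → Prop) :
    0 < Nat.card (Quot r) := by
  have : Finite (Quot r) := Finite.of_surjective (Quot.mk r) (Quot.mk_surjective)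
  have : Nonempty (Quot r) := ⟨Quot.mk r (Classical.arbitrary α)⟩
  exact Nat.card_pos

/-- The number of faces of any spanning subgraph is positive. -/
lemma faces_pos {n : ℕ} (hn : 0 < n) (Γ : RibbonGraph n) (A : Finset (Fin (2 * n))) :
    0 < Γ.faces A := by
  have : Nonempty (Fin (2 * n)) := ⟨⟨0, by omega⟩⟩
  exact orb_pos _

/-- The key inequality: if `k(A) ≤ 1` then `2 g(A) ≤ n(A)`, given `f(A) ≥ 1`. -/
lemma two_genus_le_null {n : ℕ} (hn : 0 < n) (Γ : RibbonGraph n)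
    (A : Finset (Fin (2 * n))) (hk : Γ.kComp A ≤ 1) :
    2 * Γ.genusNat A ≤ Γ.nullNat A := by
  have hf := faces_pos hn Γ A
  unfold RibbonGraph.genusNat RibbonGraph.nullNat
  omega


/-- `q(Γ; t, Y) = C(Γ; 1, Y, t Y⁻²)` is a polynomial in `t` and `Y`:
there is a two-variable polynomial agreeing with it wherever `Y ≠ 0`. -/

theorem stmt6 {n : ℕ} (hn : 0 < n) (Γ : RibbonGraph n) (hΓ : Γ.Connected) :
    ∃ p : MvPolynomial (Fin 2) ℚ, ∀ t Y : ℚ, Y ≠ 0 →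
      MvPolynomial.eval ![t, Y] p = Γ.BR 1 Y (t / Y ^ 2) := by
  classical
  refine ⟨∑ A ∈ Finset.univ.filter (fun A : Finset (Fin (2 * n)) => Γ.Closed A),
      MvPolynomial.C ((0 : ℚ) ^ (Γ.kComp A - 1)) *
        MvPolynomial.X 0 ^ Γ.genusNat A *
        MvPolynomial.X 1 ^ (Γ.nullNat A - 2 * Γ.genusNat A), ?_⟩
  intro t Y hY
  rw [RibbonGraph.BR, map_sum]
  refine Finset.sum_congr rfl (fun A _ => ?_)
  simp only [map_mul, map_pow, MvPolynomial.eval_C, MvPolynomial.eval_X,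
    Matrix.cons_val_zero, Matrix.cons_val_one, Matrix.head_cons]
  have h11 : (1 : ℚ) - 1 = 0 := by ring
  rw [h11]
  by_cases hk : Γ.kComp A - 1 = 0
  · have h2g : 2 * Γ.genusNat A ≤ Γ.nullNat A := by
      refine two_genus_le_null hn Γ A ?_
      omega
    rw [hk]
    simp only [pow_zero, one_mul]
    have hYn : Y ^ Γ.nullNat A =
        Y ^ (Γ.nullNat A - 2 * Γ.genusNat A) * (Y ^ 2) ^ Γ.genusNat A := by
      rw [← pow_mul, ← pow_add]
      congr 1
      omega
    rw [hYn, div_pow]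
    have h2 : (Y ^ 2) ^ Γ.genusNat A ≠ 0 := pow_ne_zero _ (pow_ne_zero _ hY)
    field_simp
  · rw [zero_pow hk]
    ring
end

section
/- Let Q be a quasi-tree of a connected ribbon graph Γ, let D = D(Q) be the spanning subgraph of internally dead edges, let E(Q) be the externally live edges, and let S = S₁ ∪ S₂ with S₁ a set of internally live edges and S₂ ⊆ E(Q). Then k(D ∪ S) = k(D ∪ S₁), n(D ∪ S) = n(D ∪ S₁) + |S₂|, and g(D ∪ S) = g(D ∪ S₁). -/
open Relation

section QuotCount
variable {α : Type*} [Finite α]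

instance quotFinite (r : α → α → Prop) : Finite (Quot r) :=
  Finite.of_surjective (Quot.mk r) Quot.mk_surjective

theorem quotCard_le_of_imp {r s : α → α → Prop} (h : ∀ a b, r a b → EqvGen s a b) :
    Nat.card (Quot s) ≤ Nat.card (Quot r) := by
  have hs : Function.Surjective (Quot.lift (Quot.mk s) (fun a b hab => Quot.eqvGen_sound (h a b hab)) :
      Quot r → Quot s) := by
    intro q
    obtain ⟨a, rfl⟩ := Quot.mk_surjective q
    exact ⟨Quot.mk r a, rfl⟩
  exact Nat.card_le_card_of_surjective _ hs

theorem quotCard_eq_of_iff {r s : α → α → Prop} (h1 : ∀ a b, r a b → EqvGen s a b)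
    (h2 : ∀ a b, s a b → EqvGen r a b) :
    Nat.card (Quot r) = Nat.card (Quot s) :=
  le_antisymm (quotCard_le_of_imp h2) (quotCard_le_of_imp h1)

/-- Characterization of the equivalence generated by `r` plus one extra pair. -/
theorem eqvGen_sup_pair (r : α → α → Prop) (a b : α) (x y : α) :
    EqvGen (fun u v => r u v ∨ (u = a ∧ v = b)) x y ↔
      EqvGen r x y ∨ (EqvGen r x a ∧ EqvGen r b y) ∨ (EqvGen r x b ∧ EqvGen r a y) := by
  constructor
  · intro h
    induction h with
    | rel u v huv =>
      rcases huv with h' | ⟨rfl, rfl⟩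
      · exact Or.inl (EqvGen.rel _ _ h')
      · exact Or.inr (Or.inl ⟨EqvGen.refl _, EqvGen.refl _⟩)
    | refl u => exact Or.inl (EqvGen.refl u)
    | symm u v _ ih =>
      rcases ih with h' | ⟨h1, h2⟩ | ⟨h1, h2⟩
      · exact Or.inl (EqvGen.symm _ _ h')
      · exact Or.inr (Or.inr ⟨EqvGen.symm _ _ h2, EqvGen.symm _ _ h1⟩)
      · exact Or.inr (Or.inl ⟨EqvGen.symm _ _ h2, EqvGen.symm _ _ h1⟩)
    | trans u v w _ _ ih1 ih2 =>
      rcases ih1 with h | ⟨h1, h2⟩ | ⟨h1, h2⟩ <;>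
        rcases ih2 with g | ⟨g1, g2⟩ | ⟨g1, g2⟩
      · exact Or.inl (h.trans _ _ _ g)
      · exact Or.inr (Or.inl ⟨h.trans _ _ _ g1, g2⟩)
      · exact Or.inr (Or.inr ⟨h.trans _ _ _ g1, g2⟩)
      · exact Or.inr (Or.inl ⟨h1, h2.trans _ _ _ g⟩)
      · exact Or.inl ((h1.trans _ _ _ (EqvGen.symm _ _ (h2.trans _ _ _ g1))).trans _ _ _ g2)
      · exact Or.inl (h1.trans _ _ _ g2)
      · exact Or.inr (Or.inr ⟨h1, h2.trans _ _ _ g⟩)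
      · exact Or.inl (h1.trans _ _ _ g2)
      · exact Or.inl ((h1.trans _ _ _ (EqvGen.symm _ _ (h2.trans _ _ _ g1))).trans _ _ _ g2)
  · intro h
    have hmono : ∀ u v, EqvGen r u v → EqvGen (fun u v => r u v ∨ (u = a ∧ v = b)) u v :=
      fun u v huv => EqvGen.mono (fun u v h' => Or.inl h' : ∀ u v, r u v → r u v ∨ (u = a ∧ v = b)) u v huv
    have hab : EqvGen (fun u v => r u v ∨ (u = a ∧ v = b)) a b :=
      EqvGen.rel _ _ (Or.inr ⟨rfl, rfl⟩)
    rcases h with h | ⟨h1, h2⟩ | ⟨h1, h2⟩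
    · exact hmono _ _ h
    · exact ((hmono _ _ h1).trans _ _ _ hab).trans _ _ _ (hmono _ _ h2)
    · exact ((hmono _ _ h1).trans _ _ _ (EqvGen.symm _ _ hab)).trans _ _ _ (hmono _ _ h2)

/-- Adding one pair to a relation decreases the number of classes by at most one. -/
theorem quotCard_le_pair_add_one (r : α → α → Prop) (a b : α) :
    Nat.card (Quot r) ≤ Nat.card (Quot (fun u v => r u v ∨ (u = a ∧ v = b))) + 1 := by
  classical
  set rp := fun u v => r u v ∨ (u = a ∧ v = b) with hrp
  have hwd : ∀ u v, r u v →
      (if EqvGen r u a then (Sum.inr () : Quot rp ⊕ Unit) else Sum.inl (Quot.mk rp u)) =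
      (if EqvGen r v a then (Sum.inr () : Quot rp ⊕ Unit) else Sum.inl (Quot.mk rp v)) := by
    intro u v huv
    have he : EqvGen r u a ↔ EqvGen r v a :=
      ⟨fun h => (EqvGen.symm _ _ (EqvGen.rel _ _ huv)).trans _ _ _ h,
       fun h => (EqvGen.rel _ _ huv).trans _ _ _ h⟩
    by_cases h : EqvGen r u a
    · rw [if_pos h, if_pos (he.mp h)]
    · rw [if_neg h, if_neg (fun h' => h (he.mpr h'))]
      exact congrArg Sum.inl (Quot.sound (Or.inl huv))
  set G : Quot r → Quot rp ⊕ Unit :=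
    Quot.lift (fun u => if EqvGen r u a then (Sum.inr () : Quot rp ⊕ Unit)
      else Sum.inl (Quot.mk rp u)) hwd with hG
  have hGinj : Function.Injective G := by
    intro q1 q2
    induction q1 using Quot.ind with | _ x =>
    induction q2 using Quot.ind with | _ y =>
    intro h
    by_cases hx : EqvGen r x a <;> by_cases hy : EqvGen r y a
    · exact (Quot.eqvGen_sound (hx.trans _ _ _ (EqvGen.symm _ _ hy)))
    · simp only [hG, Quot.lift_mk, if_pos hx, if_neg hy] at h
      cases h
    · simp only [hG, Quot.lift_mk, if_neg hx, if_pos hy] at h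
      cases h
    · simp only [hG, Quot.lift_mk, if_neg hx, if_neg hy, Sum.inl.injEq] at h
      have := Quot.eqvGen_exact h
      rw [eqvGen_sup_pair] at this
      rcases this with h' | ⟨h1, _⟩ | ⟨_, h2⟩
      · exact Quot.eqvGen_sound h'
      · exact absurd h1 hx
      · exact absurd (EqvGen.symm _ _ h2) hy
  calc Nat.card (Quot r) ≤ Nat.card (Quot rp ⊕ Unit) := Nat.card_le_card_of_injective G hGinj
    _ = Nat.card (Quot rp) + 1 := by simp [Nat.card_sum]

end QuotCount

/-- `w` lies in the half-open arc `(x, x']` of the cycle `Fin N`. -/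
def SideOf {N : ℕ} (x x' w : Fin N) : Prop :=
  0 < (w - x).val ∧ (w - x).val ≤ (x' - x).val

instance {N : ℕ} (x x' w : Fin N) : Decidable (SideOf x x' w) := by
  unfold SideOf; infer_instance

theorem subval_spec {N : ℕ} (a b : Fin N) :
    ((a - b).val + b.val = a.val ∨ (a - b).val + b.val = a.val + N) ∧ (a - b).val < N := by
  refine ⟨?_, (a - b).isLt⟩
  have h : (a - b).val = (a.val + (N - b.val)) % N := by
    rw [Fin.sub_def]; simp [Nat.add_comm]
  have hA := a.isLt
  have hB := b.isLt
  rcases Nat.lt_or_ge (a.val + (N - b.val)) N with hc | hc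
  · rw [Nat.mod_eq_of_lt hc] at h
    omega
  · have : (a.val + (N - b.val)) % N = a.val + (N - b.val) - N := by
      rw [Nat.mod_eq_sub_mod hc, Nat.mod_eq_of_lt (by omega)]
    omega

theorem addone_spec {N : ℕ} [NeZero N] (w : Fin N) :
    (w + 1).val = w.val + 1 ∨ ((w + 1).val = 0 ∧ w.val + 1 = N) := by
  have h : (w + 1).val = (w.val + (1 : Fin N).val) % N := by rw [Fin.add_def]
  have h1 : (1 : Fin N).val = 1 % N := Fin.val_one' N
  have hw := w.isLt
  have hw1 := (w + 1).isLt
  rcases Nat.lt_or_ge 1 N with hN | hN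
  · rw [Nat.mod_eq_of_lt hN] at h1
    rw [h1] at h
    rcases Nat.lt_or_ge (w.val + 1) N with hc | hc
    · rw [Nat.mod_eq_of_lt hc] at h; omega
    · have he : w.val + 1 = N := by omega
      rw [he] at h; rw [Nat.mod_self] at h; omega
  · have hN1 : N = 1 := by have := NeZero.pos N; omega
    subst hN1
    omega

theorem val_ne_of_ne {N : ℕ} {a b : Fin N} (h : a ≠ b) : a.val ≠ b.val :=
  fun h' => h (Fin.ext h')

/-- a0 : away from the endpoints, `SideOf` agrees with the `ReachesBefore` side. -/
theorem sideOf_iff_lt {N : ℕ} {x x' w : Fin N} (h1 : w ≠ x) (h2 : w ≠ x') :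
    SideOf x x' w ↔ (w - x).val < (x' - x).val := by
  have s1 := subval_spec w x
  have s2 := subval_spec x' x
  have e1 := val_ne_of_ne h1
  have e2 := val_ne_of_ne h2
  unfold SideOf
  omega

theorem sideOf_self {N : ℕ} (x x' : Fin N) : ¬ SideOf x x' x := by
  have s1 := subval_spec x x
  unfold SideOf
  omega

theorem sideOf_snd {N : ℕ} {x x' : Fin N} (h : x ≠ x') : SideOf x x' x' := by
  have s1 := subval_spec x' x
  have e := val_ne_of_ne h
  unfold SideOf
  omega

/-- a1 : stepping `w ↦ w + 1` does not change the side unless `w` is an endpoint. -/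
theorem sideOf_step {N : ℕ} [NeZero N] {y y' w : Fin N} (h1 : w ≠ y) (h2 : w ≠ y') :
    SideOf y y' (w + 1) ↔ SideOf y y' w := by
  have s1 := subval_spec (w + 1) y
  have s2 := subval_spec w y
  have s3 := subval_spec y' y
  have a1 := addone_spec w
  have e1 := val_ne_of_ne h1
  have e2 := val_ne_of_ne h2
  unfold SideOf
  omega

/-- a1b : jumping across the own chord, from `x` to `x' + 1`. -/
theorem sideOf_jump1 {N : ℕ} [NeZero N] {x x' : Fin N} (h : x ≠ x') :
    SideOf x x' (x' + 1) ↔ SideOf x x' x := by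
  have s1 := subval_spec (x' + 1) x
  have s2 := subval_spec x x
  have s3 := subval_spec x' x
  have a1 := addone_spec x'
  have e := val_ne_of_ne h
  unfold SideOf
  omega

theorem sideOf_jump2 {N : ℕ} [NeZero N] {x x' : Fin N} (h : x ≠ x') :
    SideOf x x' (x + 1) ↔ SideOf x x' x' := by
  have s1 := subval_spec (x + 1) x
  have s2 := subval_spec x' x
  have a1 := addone_spec x
  have e := val_ne_of_ne h
  unfold SideOf
  omega

theorem sideOf_rot {N : ℕ} [NeZero N] (x x' w t : Fin N) :
    SideOf (x + t) (x' + t) (w + t) ↔ SideOf x x' w := by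
  unfold SideOf
  rw [add_sub_add_right_eq_sub, add_sub_add_right_eq_sub]

theorem sideOf_shift {N : ℕ} [NeZero N] (y a b c : Fin N) :
    SideOf a b c ↔ SideOf (a - y) (b - y) (c - y) := by
  conv_lhs => rw [← sub_add_cancel a y, ← sub_add_cancel b y, ← sub_add_cancel c y]
  rw [sideOf_rot]

theorem sideOf_symm_zero {N : ℕ} [NeZero N] {x x' y' : Fin N} (hxx : x ≠ x') (hyy : (0:Fin N) ≠ y')
    (h1 : x ≠ 0) (h2 : x ≠ y') (h3 : x' ≠ 0) (h4 : x' ≠ y')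
    (h : SideOf x x' 0 ↔ SideOf x x' y') : SideOf 0 y' x ↔ SideOf 0 y' x' := by
  have s1 := subval_spec (0:Fin N) x
  have s2 := subval_spec y' x
  have s3 := subval_spec x' x
  have e1 := val_ne_of_ne hxx
  have e2 := val_ne_of_ne hyy
  have e3 := val_ne_of_ne h1
  have e4 := val_ne_of_ne h2
  have e5 := val_ne_of_ne h3
  have e6 := val_ne_of_ne h4
  have hww : ∀ w : Fin N, w - 0 = w := fun w => sub_zero w
  unfold SideOf at *
  simp only [hww] at *
  simp only [Fin.val_zero] at *
  rcases s1.1 with c1 | c1 <;> rcases s2.1 with c2 | c2 <;> rcases s3.1 with c3 | c3 <;> omega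

/-- a2 : crossing of chords is symmetric. -/
theorem sideOf_symm {N : ℕ} [NeZero N] {x x' y y' : Fin N} (hxx : x ≠ x') (hyy : y ≠ y')
    (h1 : x ≠ y) (h2 : x ≠ y') (h3 : x' ≠ y) (h4 : x' ≠ y')
    (h : SideOf x x' y ↔ SideOf x x' y') : SideOf y y' x ↔ SideOf y y' x' := by
  have key : ∀ a b c : Fin N, SideOf a b c ↔ SideOf (a - y) (b - y) (c - y) :=
    fun a b c => sideOf_shift y a b c
  have hd : ∀ a b : Fin N, a ≠ b → a - y ≠ b - y := by
    intro a b hab hc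
    exact hab (by rwa [sub_left_inj] at hc)
  have h0 : y - y = 0 := sub_self y
  rw [key y y' x, key y y' x', h0]
  refine sideOf_symm_zero (x := x - y) (x' := x' - y) (y' := y' - y)
    (hd _ _ hxx) (h0 ▸ hd _ _ hyy) (h0 ▸ hd _ _ h1) (hd _ _ h2) (h0 ▸ hd _ _ h3) (hd _ _ h4) ?_
  rw [← h0, ← key x x' y, ← key x x' y']
  exact h

/-- a3 : a chord splits only the class containing its endpoints. -/
theorem sideOf_split_zero {N : ℕ} [NeZero N] {x x' y' u w : Fin N} (hxx : x ≠ x') (hyy : (0:Fin N) ≠ y')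
    (h1 : x ≠ 0) (h2 : x ≠ y') (h3 : x' ≠ 0) (h4 : x' ≠ y')
    (hnc : SideOf 0 y' x ↔ SideOf 0 y' x')
    (huw : SideOf 0 y' u ↔ SideOf 0 y' w)
    (hsp : ¬ (SideOf x x' u ↔ SideOf x x' w)) :
    SideOf 0 y' u ↔ SideOf 0 y' x := by
  have s1 := subval_spec u x
  have s2 := subval_spec w x
  have s3 := subval_spec x' x
  have e1 := val_ne_of_ne hxx
  have e2 := val_ne_of_ne hyy
  have e3 := val_ne_of_ne h1
  have e4 := val_ne_of_ne h2
  have e5 := val_ne_of_ne h3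
  have e6 := val_ne_of_ne h4
  have hww : ∀ v : Fin N, v - 0 = v := fun v => sub_zero v
  unfold SideOf at *
  simp only [hww] at *
  simp only [Fin.val_zero] at *
  rcases s1.1 with c1 | c1 <;> rcases s2.1 with c2 | c2 <;> rcases s3.1 with c3 | c3 <;> omega

theorem sideOf_split {N : ℕ} [NeZero N] {x x' y y' u w : Fin N} (hxx : x ≠ x') (hyy : y ≠ y')
    (h1 : x ≠ y) (h2 : x ≠ y') (h3 : x' ≠ y) (h4 : x' ≠ y')
    (hnc : SideOf y y' x ↔ SideOf y y' x')
    (huw : SideOf y y' u ↔ SideOf y y' w)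
    (hsp : ¬ (SideOf x x' u ↔ SideOf x x' w)) :
    SideOf y y' u ↔ SideOf y y' x := by
  have key : ∀ a b c : Fin N, SideOf a b c ↔ SideOf (a - y) (b - y) (c - y) :=
    fun a b c => sideOf_shift y a b c
  have hd : ∀ a b : Fin N, a ≠ b → a - y ≠ b - y := by
    intro a b hab hc
    exact hab (by rwa [sub_left_inj] at hc)
  have h0 : y - y = 0 := sub_self y
  rw [key y y' u, key y y' x, h0]
  refine sideOf_split_zero (x := x - y) (x' := x' - y) (y' := y' - y) (u := u - y) (w := w - y)
    (hd _ _ hxx) (h0 ▸ hd _ _ hyy) (h0 ▸ hd _ _ h1) (hd _ _ h2) (h0 ▸ hd _ _ h3) (hd _ _ h4)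
    ?_ ?_ ?_
  · rw [← h0, ← key, ← key]; exact hnc
  · rw [← h0, ← key, ← key]; exact huw
  · rw [← key, ← key]; exact hsp

section Core

open Relation Equiv

abbrev OrbRel {α : Type*} (f : α → α) : α → α → Prop := fun i j => j = f i

variable {N : ℕ} [NeZero N]

def chordsDisj {N : ℕ} (c d : Fin N × Fin N) : Prop :=
  c.1 ≠ d.1 ∧ c.1 ≠ d.2 ∧ c.2 ≠ d.1 ∧ c.2 ≠ d.2

def GoodList {N : ℕ} (L : List (Fin N × Fin N)) : Prop :=
  L.Nodup ∧ (∀ c ∈ L, c.1 ≠ c.2) ∧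
  ∀ c ∈ L, ∀ d ∈ L, c ≠ d → chordsDisj c d ∧ (SideOf c.1 c.2 d.1 ↔ SideOf c.1 c.2 d.2)

def tauL {N : ℕ} (L : List (Fin N × Fin N)) : Equiv.Perm (Fin N) :=
  (L.map fun c => Equiv.swap c.1 c.2).prod

def rotN (N : ℕ) [NeZero N] : Equiv.Perm (Fin N) := Equiv.addLeft (1 : Fin N)

def IsEnd {N : ℕ} (L : List (Fin N × Fin N)) (w : Fin N) : Prop := ∃ c ∈ L, w = c.1 ∨ w = c.2

def chi {N : ℕ} (L : List (Fin N × Fin N)) (w : Fin N) : List Bool :=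
  L.map fun c => decide (SideOf c.1 c.2 w)

theorem chi_cons (c : Fin N × Fin N) (L : List (Fin N × Fin N)) (w : Fin N) :
    chi (c :: L) w = decide (SideOf c.1 c.2 w) :: chi L w := rfl

theorem tauL_cons (c : Fin N × Fin N) (L : List (Fin N × Fin N)) :
    tauL (c :: L) = Equiv.swap c.1 c.2 * tauL L := by
  simp [tauL]

theorem goodList_tail {c : Fin N × Fin N} {L : List (Fin N × Fin N)} (h : GoodList (c :: L)) :
    GoodList L := by
  obtain ⟨h1, h2, h3⟩ := h
  exact ⟨(List.nodup_cons.mp h1).2, fun d hd => h2 d (List.mem_cons_of_mem _ hd),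
    fun d hd e he hde => h3 d (List.mem_cons_of_mem _ hd) e (List.mem_cons_of_mem _ he) hde⟩

theorem goodList_head_rel {c : Fin N × Fin N} {L : List (Fin N × Fin N)} (h : GoodList (c :: L))
    {d : Fin N × Fin N} (hd : d ∈ L) :
    chordsDisj c d ∧ (SideOf c.1 c.2 d.1 ↔ SideOf c.1 c.2 d.2) ∧
      (SideOf d.1 d.2 c.1 ↔ SideOf d.1 d.2 c.2) := by
  have hne : c ≠ d := fun he => (List.nodup_cons.mp h.1).1 (he ▸ hd)
  have r1 := h.2.2 c (List.mem_cons_self) d (List.mem_cons_of_mem _ hd) hne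
  have r2 := h.2.2 d (List.mem_cons_of_mem _ hd) c (List.mem_cons_self) (Ne.symm hne)
  exact ⟨r1.1, r1.2, r2.2⟩

theorem tauL_fix {L : List (Fin N × Fin N)} {w : Fin N} (h : ¬ IsEnd L w) : tauL L w = w := by
  induction L with
  | nil => rfl
  | cons c L ih =>
    rw [tauL_cons]
    have hw : ¬ IsEnd L w := fun ⟨d, hd, he⟩ => h ⟨d, List.mem_cons_of_mem _ hd, he⟩
    have h1 : w ≠ c.1 := fun he => h ⟨c, List.mem_cons_self, Or.inl he⟩
    have h2 : w ≠ c.2 := fun he => h ⟨c, List.mem_cons_self, Or.inr he⟩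
    show Equiv.swap c.1 c.2 (tauL L w) = w
    rw [ih hw, Equiv.swap_apply_of_ne_of_ne h1 h2]

theorem head_not_end {c : Fin N × Fin N} {L : List (Fin N × Fin N)} (h : GoodList (c :: L)) :
    ¬ IsEnd L c.1 ∧ ¬ IsEnd L c.2 := by
  constructor <;>
  · rintro ⟨d, hd, he | he⟩ <;>
    · have := (goodList_head_rel h hd).1
      unfold chordsDisj at this
      tauto

theorem tauL_swap {L : List (Fin N × Fin N)} (hG : GoodList L) {c : Fin N × Fin N} (hc : c ∈ L) :
    tauL L c.1 = c.2 ∧ tauL L c.2 = c.1 := by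
  induction L with
  | nil => exact absurd hc List.not_mem_nil
  | cons d L ih =>
    rw [tauL_cons]
    rcases List.mem_cons.mp hc with rfl | hc'
    · have hne := head_not_end hG
      constructor
      · show Equiv.swap c.1 c.2 (tauL L c.1) = c.2
        rw [tauL_fix hne.1, Equiv.swap_apply_left]
      · show Equiv.swap c.1 c.2 (tauL L c.2) = c.1
        rw [tauL_fix hne.2, Equiv.swap_apply_right]
    · have hd := goodList_head_rel hG hc'
      obtain ⟨hd1, hd2, hd3, hd4⟩ := hd.1
      have := ih (goodList_tail hG) hc'
      constructor
      · show Equiv.swap d.1 d.2 (tauL L c.1) = c.2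
        rw [this.1, Equiv.swap_apply_of_ne_of_ne (Ne.symm hd2) (Ne.symm hd4)]
      · show Equiv.swap d.1 d.2 (tauL L c.2) = c.1
        rw [this.2, Equiv.swap_apply_of_ne_of_ne (Ne.symm hd1) (Ne.symm hd3)]

theorem swap_commute_tauL {c : Fin N × Fin N} {L : List (Fin N × Fin N)} (h : GoodList (c :: L)) :
    Commute (Equiv.swap c.1 c.2) (tauL L) := by
  apply Equiv.Perm.Disjoint.commute
  intro x
  by_cases hx : x = c.1 ∨ x = c.2
  · right
    rcases hx with rfl | rfl
    · exact tauL_fix (head_not_end h).1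
    · exact tauL_fix (head_not_end h).2
  · left
    push_neg at hx
    exact Equiv.swap_apply_of_ne_of_ne hx.1 hx.2

theorem chi_step {L : List (Fin N × Fin N)} (hG : GoodList L) (w : Fin N) :
    chi L ((rotN N * tauL L) w) = chi L w := by
  unfold chi
  rw [List.map_eq_map_iff]
  intro d hd
  rw [decide_eq_decide]
  have hdd : d.1 ≠ d.2 := hG.2.1 d hd
  have happ : (rotN N * tauL L) w = tauL L w + 1 := by
    show rotN N (tauL L w) = tauL L w + 1
    simp [rotN, add_comm]
  rw [happ]
  by_cases hw : IsEnd L w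
  · obtain ⟨c, hc, hce⟩ := hw
    have hcc : c.1 ≠ c.2 := hG.2.1 c hc
    by_cases hdc : d = c
    · subst hdc
      rcases hce with rfl | rfl
      · rw [(tauL_swap hG hc).1]
        exact sideOf_jump1 hcc
      · rw [(tauL_swap hG hc).2]
        exact sideOf_jump2 hcc
    · have hrel := hG.2.2 d hd c hc hdc
      obtain ⟨he1, he2, he3, he4⟩ := hrel.1
      rcases hce with rfl | rfl
      · rw [(tauL_swap hG hc).1]
        rw [sideOf_step (Ne.symm he2) (Ne.symm he4)]
        exact hrel.2.symm
      · rw [(tauL_swap hG hc).2]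
        rw [sideOf_step (Ne.symm he1) (Ne.symm he3)]
        exact hrel.2
  · rw [tauL_fix hw]
    have h1 : w ≠ d.1 := fun he => hw ⟨d, hd, Or.inl he⟩
    have h2 : w ≠ d.2 := fun he => hw ⟨d, hd, Or.inr he⟩
    exact sideOf_step h1 h2

theorem chi_of_eqvGen {L : List (Fin N × Fin N)} (hG : GoodList L) {u v : Fin N}
    (h : EqvGen (OrbRel ⇑(rotN N * tauL L)) u v) : chi L u = chi L v := by
  induction h with
  | rel u v huv => rw [huv]; exact (chi_step hG u).symm
  | refl u => rfl
  | symm u v _ ih => exact ih.symm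
  | trans u v w _ _ ih1 ih2 => exact ih1.trans ih2

/-- Multiplying a permutation by a transposition changes the orbit count by at most one. -/
theorem card_quot_mul_swap_le {α : Type*} [DecidableEq α] [Finite α] (g : Equiv.Perm α) (a b : α) :
    Nat.card (Quot (OrbRel ⇑(g * Equiv.swap a b))) ≤ Nat.card (Quot (OrbRel ⇑g)) + 1 := by
  have cl1 : ∀ u v, ((OrbRel ⇑g) u v ∨ (u = a ∧ v = b)) →
      EqvGen (fun u v => (OrbRel ⇑(g * Equiv.swap a b)) u v ∨ (u = a ∧ v = b)) u v := by
    rintro u v (huv | ⟨rfl, rfl⟩)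
    · replace huv : v = g u := huv
      by_cases hu : u = a
      · have h : (OrbRel ⇑(g * Equiv.swap a b)) b v := by
          show v = (g * Equiv.swap a b) b
          show v = g (Equiv.swap a b b)
          rw [Equiv.swap_apply_right, ← hu]; exact huv
        exact EqvGen.trans _ _ _ (EqvGen.rel _ _ (Or.inr ⟨hu, rfl⟩)) (EqvGen.rel _ _ (Or.inl h))
      · by_cases hu' : u = b
        · have h : (OrbRel ⇑(g * Equiv.swap a b)) a v := by
            show v = (g * Equiv.swap a b) a
            show v = g (Equiv.swap a b a)
            rw [Equiv.swap_apply_left, ← hu']; exact huv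
          exact EqvGen.trans _ _ _ (EqvGen.symm _ _ (EqvGen.rel _ _ (Or.inr ⟨rfl, hu'⟩)))
            (EqvGen.rel _ _ (Or.inl h))
        · refine EqvGen.rel _ _ (Or.inl ?_)
          show v = g (Equiv.swap a b u)
          rw [Equiv.swap_apply_of_ne_of_ne hu hu']; exact huv
    · exact EqvGen.rel _ _ (Or.inr ⟨rfl, rfl⟩)
  have cl2 : ∀ u v, ((OrbRel ⇑(g * Equiv.swap a b)) u v ∨ (u = a ∧ v = b)) →
      EqvGen (fun u v => (OrbRel ⇑g) u v ∨ (u = a ∧ v = b)) u v := by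
    rintro u v (huv | ⟨rfl, rfl⟩)
    · replace huv : v = g (Equiv.swap a b u) := huv
      by_cases hu : u = a
      · rw [hu, Equiv.swap_apply_left] at huv
        exact EqvGen.trans _ _ _ (EqvGen.rel _ _ (Or.inr ⟨hu, rfl⟩)) (EqvGen.rel _ _ (Or.inl huv))
      · by_cases hu' : u = b
        · rw [hu', Equiv.swap_apply_right] at huv
          exact EqvGen.trans _ _ _ (EqvGen.symm _ _ (EqvGen.rel _ _ (Or.inr ⟨rfl, hu'⟩)))
            (EqvGen.rel _ _ (Or.inl huv))
        · rw [Equiv.swap_apply_of_ne_of_ne hu hu'] at huv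
          exact EqvGen.rel _ _ (Or.inl huv)
    · exact EqvGen.rel _ _ (Or.inr ⟨rfl, rfl⟩)
  calc Nat.card (Quot (OrbRel ⇑(g * Equiv.swap a b)))
      ≤ Nat.card (Quot (fun u v => (OrbRel ⇑(g * Equiv.swap a b)) u v ∨ (u = a ∧ v = b))) + 1 :=
        quotCard_le_pair_add_one _ a b
    _ = Nat.card (Quot (fun u v => (OrbRel ⇑g) u v ∨ (u = a ∧ v = b))) + 1 := by
        rw [quotCard_eq_of_iff cl2 cl1]
    _ ≤ Nat.card (Quot (OrbRel ⇑g)) + 1 := by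
        have := quotCard_le_of_imp (r := OrbRel ⇑g)
          (s := fun u v => (OrbRel ⇑g) u v ∨ (u = a ∧ v = b)) ?_
        · omega
        · intro u v h
          exact EqvGen.rel _ _ (Or.inl h)

open Fin.NatCast Fin.CommRing in
theorem card_quot_rot : Nat.card (Quot (OrbRel ⇑(rotN N))) = 1 := by
  rw [Nat.card_eq_one_iff_exists]
  refine ⟨Quot.mk _ 0, fun q => ?_⟩
  induction q using Quot.ind with | _ w =>
  suffices h : ∀ m : ℕ, Quot.mk (OrbRel ⇑(rotN N)) ((m : Fin N)) = Quot.mk _ 0 by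
    have := h w.val
    rwa [Fin.cast_val_eq_self] at this
  intro m
  induction m with
  | zero => simp
  | succ k ih =>
    have hstep : ((k + 1 : ℕ) : Fin N) = rotN N ((k : ℕ) : Fin N) := by
      show _ = 1 + ((k : ℕ) : Fin N)
      push_cast
      ring
    have he : Quot.mk (OrbRel ⇑(rotN N)) ((k : ℕ) : Fin N) =
        Quot.mk (OrbRel ⇑(rotN N)) (rotN N ((k : ℕ) : Fin N)) := Quot.sound rfl
    rw [hstep, ← he]
    exact ih

theorem card_quot_upper {L : List (Fin N × Fin N)} (hG : GoodList L) :
    Nat.card (Quot (OrbRel ⇑(rotN N * tauL L))) ≤ L.length + 1 := by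
  induction L with
  | nil =>
    have : tauL ([] : List (Fin N × Fin N)) = 1 := rfl
    rw [this, mul_one, card_quot_rot]
    simp
  | cons c L ih =>
    have hmul : rotN N * tauL (c :: L) = (rotN N * tauL L) * Equiv.swap c.1 c.2 := by
      rw [tauL_cons, (swap_commute_tauL hG).eq, ← mul_assoc]
    rw [hmul]
    calc Nat.card (Quot (OrbRel ⇑((rotN N * tauL L) * Equiv.swap c.1 c.2)))
        ≤ Nat.card (Quot (OrbRel ⇑(rotN N * tauL L))) + 1 := card_quot_mul_swap_le _ _ _
      _ ≤ (c :: L).length + 1 := by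
          have := ih (goodList_tail hG)
          simp only [List.length_cons]
          omega

end Core

section Core2
open Relation Equiv
variable {N : ℕ} [NeZero N]

theorem chi_card {L : List (Fin N × Fin N)} (hG : GoodList L) :
    (Finset.univ.image (chi L)).card = L.length + 1 := by
  classical
  induction L with
  | nil =>
    have h : chi ([] : List (Fin N × Fin N)) = fun _ => ([] : List Bool) := rfl
    rw [h, Finset.image_const Finset.univ_nonempty]
    simp
  | cons c L ih =>
    have hG' := goodList_tail hG
    have hcc : c.1 ≠ c.2 := hG.2.1 c (List.mem_cons_self)
    have hv2 : chi L c.2 = chi L c.1 := by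
      unfold chi; rw [List.map_eq_map_iff]
      intro d hd
      rw [decide_eq_decide]
      exact ((goodList_head_rel hG hd).2.2).symm
    have h1 : chi (c :: L) c.1 = false :: chi L c.1 := by
      rw [chi_cons]; congr 1; simp [sideOf_self]
    have h2 : chi (c :: L) c.2 = true :: chi L c.1 := by
      rw [chi_cons, hv2]; congr 1; simp [sideOf_snd hcc]
    set v0 := chi L c.1 with hv0def
    set I := Finset.univ.image (chi (c :: L)) with hI
    set I' := Finset.univ.image (chi L) with hI'
    have hmemI : ∀ w, chi (c :: L) w ∈ I := fun w => Finset.mem_image_of_mem _ (Finset.mem_univ w)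
    have hmemI' : ∀ w, chi L w ∈ I' := fun w => Finset.mem_image_of_mem _ (Finset.mem_univ w)
    have hfI : (false :: v0) ∈ I := h1 ▸ hmemI c.1
    have htI : (true :: v0) ∈ I := h2 ▸ hmemI c.2
    have hv0I' : v0 ∈ I' := hmemI' c.1
    have hkey : ∀ u w : Fin N, chi L u = chi L w → chi L u ≠ v0 →
        chi (c :: L) u = chi (c :: L) w := by
      intro u w huw hne0
      rw [chi_cons, chi_cons, huw]
      by_contra hq
      have hhd : ¬ (SideOf c.1 c.2 u ↔ SideOf c.1 c.2 w) := by
        intro hiff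
        exact hq (by rw [decide_eq_decide.mpr hiff])
      apply hne0
      rw [hv0def]
      unfold chi
      rw [List.map_eq_map_iff]
      intro d hd
      rw [decide_eq_decide]
      have hrel := goodList_head_rel hG hd
      obtain ⟨he1, he2, he3, he4⟩ := hrel.1
      have huw' : SideOf d.1 d.2 u ↔ SideOf d.1 d.2 w := by
        have := List.map_eq_map_iff.mp huw d hd
        exact decide_eq_decide.mp this
      exact sideOf_split hcc (hG'.2.1 d hd) he1 he2 he3 he4 hrel.2.2 huw' hhd
    have hpairmem : ∀ w : Fin N, chi L w = v0 →
        chi (c :: L) w ∈ ({false :: v0, true :: v0} : Finset (List Bool)) := by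
      intro w hw
      rw [chi_cons, hw]
      rcases Bool.eq_false_or_eq_true (decide (SideOf c.1 c.2 w)) with hb | hb <;>
        simp [hb]
    have hbij : (I \ {false :: v0, true :: v0}).card = (I'.erase v0).card := by
      apply Finset.card_nbij (i := List.tail)
      · intro l hl
        obtain ⟨hlI, hlp⟩ := Finset.mem_sdiff.mp hl
        obtain ⟨w, _, rfl⟩ := Finset.mem_image.mp hlI
        rw [chi_cons]
        simp only [List.tail_cons]
        refine Finset.mem_erase.mpr ⟨?_, hmemI' w⟩
        intro hteq
        exact hlp (hpairmem w hteq)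
      · intro l1 hl1 l2 hl2 htail
        simp only [Finset.coe_sdiff, Set.mem_diff, Finset.mem_coe] at hl1 hl2
        obtain ⟨hl1I, hl1p⟩ := hl1
        obtain ⟨hl2I, hl2p⟩ := hl2
        obtain ⟨u, _, rfl⟩ := Finset.mem_image.mp hl1I
        obtain ⟨w, _, rfl⟩ := Finset.mem_image.mp hl2I
        have htu : chi L u = chi L w := by
          have e1 : (chi (c :: L) u).tail = chi L u := by rw [chi_cons, List.tail_cons]
          have e2 : (chi (c :: L) w).tail = chi L w := by rw [chi_cons, List.tail_cons]
          rw [← e1, ← e2, htail]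
        have hnev0 : chi L u ≠ v0 := fun h => hl1p (hpairmem u h)
        exact hkey u w htu hnev0
      · intro v hv
        simp only [Finset.coe_erase, Set.mem_diff, Finset.mem_coe, Set.mem_singleton_iff] at hv
        obtain ⟨hvI', hvne⟩ := hv
        obtain ⟨w, _, rfl⟩ := Finset.mem_image.mp hvI'
        refine ⟨chi (c :: L) w, ?_, by rw [chi_cons, List.tail_cons]⟩
        simp only [Finset.coe_sdiff, Set.mem_diff, Finset.mem_coe]
        refine ⟨hmemI w, ?_⟩
        intro hmem
        apply hvne
        rcases Finset.mem_insert.mp hmem with hh | hh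
        · have : (chi (c :: L) w).tail = v0 := by rw [hh, List.tail_cons]
          rwa [chi_cons, List.tail_cons] at this
        · have : (chi (c :: L) w).tail = v0 := by rw [Finset.mem_singleton.mp hh, List.tail_cons]
          rwa [chi_cons, List.tail_cons] at this
    have hpairsub : ({false :: v0, true :: v0} : Finset (List Bool)) ⊆ I := by
      intro l hl
      rcases Finset.mem_insert.mp hl with rfl | hl
      · exact hfI
      · rw [Finset.mem_singleton.mp hl]
        exact htI
    have hcard1 : (I \ {false :: v0, true :: v0}).card +
        ({false :: v0, true :: v0} : Finset (List Bool)).card = I.card :=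
      Finset.card_sdiff_add_card_eq_card hpairsub
    have hcard2 : ({false :: v0, true :: v0} : Finset (List Bool)).card = 2 := by
      rw [Finset.card_insert_of_notMem (by simp), Finset.card_singleton]
    have hcard3 : (I'.erase v0).card = I'.card - 1 := Finset.card_erase_of_mem hv0I'
    have hpos : 0 < I'.card := Finset.card_pos.mpr ⟨v0, hv0I'⟩
    have hih := ih hG'
    simp only [List.length_cons]
    omega

theorem core_count {L : List (Fin N × Fin N)} (hG : GoodList L) :
    Nat.card (Quot (OrbRel ⇑(rotN N * tauL L))) = L.length + 1 ∧
    ∀ u v : Fin N, chi L u = chi L v →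
      Quot.mk (OrbRel ⇑(rotN N * tauL L)) u = Quot.mk (OrbRel ⇑(rotN N * tauL L)) v := by
  classical
  set g := rotN N * tauL L with hg
  have hsound : ∀ u v : Fin N, OrbRel ⇑g u v →
      (⟨chi L u, Finset.mem_image_of_mem _ (Finset.mem_univ u)⟩ :
        {l // l ∈ Finset.univ.image (chi L)}) =
      ⟨chi L v, Finset.mem_image_of_mem _ (Finset.mem_univ v)⟩ := by
    intro u v huv
    have hv : v = g u := huv
    apply Subtype.ext
    show chi L u = chi L v
    rw [hv]
    exact (chi_step hG u).symm
  let F : Fin N → {l // l ∈ Finset.univ.image (chi L)} :=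
    fun w => ⟨chi L w, Finset.mem_image_of_mem _ (Finset.mem_univ w)⟩
  let ψ : Quot (OrbRel ⇑g) → {l // l ∈ Finset.univ.image (chi L)} := Quot.lift F hsound
  have hψapp : ∀ w, ψ (Quot.mk (OrbRel ⇑g) w) = F w := fun w => rfl
  have hsurj : Function.Surjective ψ := by
    rintro ⟨l, hl⟩
    obtain ⟨w, _, rfl⟩ := Finset.mem_image.mp hl
    exact ⟨Quot.mk _ w, rfl⟩
  have hcardT : Nat.card {l // l ∈ Finset.univ.image (chi L)} = L.length + 1 := by
    rw [Nat.card_eq_finsetCard]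
    exact chi_card hG
  have hle : Nat.card {l // l ∈ Finset.univ.image (chi L)} ≤ Nat.card (Quot (OrbRel ⇑g)) :=
    Nat.card_le_card_of_surjective ψ hsurj
  have hub : Nat.card (Quot (OrbRel ⇑g)) ≤ L.length + 1 := card_quot_upper hG
  have hcardQ : Nat.card (Quot (OrbRel ⇑g)) = L.length + 1 := by omega
  refine ⟨hcardQ, ?_⟩
  intro u v huv
  have hbij : Function.Bijective ψ := by
    rw [Nat.bijective_iff_surjective_and_card]
    exact ⟨hsurj, by omega⟩
  apply hbij.injective
  rw [hψapp, hψapp]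
  exact Subtype.ext huv

end Core2

open Equiv

section CycleParam
open Relation Fin.NatCast Fin.CommRing
variable {M p : ℕ} [NeZero p] (e : Fin p ≃ Fin M) (f : Fin M → Fin M)

theorem iter_e (he : ∀ m : Fin p, f (e m) = e (m + 1)) :
    ∀ (m : ℕ) (i : Fin p), f^[m] (e i) = e (i + (m : Fin p)) := by
  intro m
  induction m with
  | zero => intro i; simp
  | succ k ih =>
    intro i
    rw [Function.iterate_succ_apply', ih i, he]
    congr 1
    push_cast
    ring

theorem rb_char (he : ∀ m : Fin p, f (e m) = e (m + 1)) (i j l : Fin p) :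
    ReachesBefore f (e i) (e j) (e l) ↔ (j - i).val < (l - i).val := by
  constructor
  · rintro ⟨m, hm, hk⟩
    rw [iter_e e f he] at hm
    have hji : j - i = (m : Fin p) := by
      have := e.injective hm
      rw [← this]; ring
    have hmod : (j - i).val = m % p := by rw [hji, Fin.val_natCast]
    by_contra hc
    push_neg at hc
    -- (l - i).val ≤ (j - i).val ≤ m
    have hmle : m % p ≤ m := Nat.mod_le m p
    have hlm : (l - i).val ≤ m := by omega
    exact hk (l - i).val hlm (by
      rw [iter_e e f he]
      congr 1
      rw [Fin.cast_val_eq_self]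
      ring)
  · intro hlt
    refine ⟨(j - i).val, ?_, ?_⟩
    · rw [iter_e e f he, Fin.cast_val_eq_self]
      congr 1
      ring
    · intro k hk heq
      rw [iter_e e f he] at heq
      have : i + (k : Fin p) = l := e.injective heq
      have h2 : (k : Fin p) = l - i := by rw [← this]; ring
      have h3 : k % p = (l - i).val := by rw [← h2, Fin.val_natCast]
      have h4 : k < p := lt_of_le_of_lt hk (lt_of_lt_of_le hlt (le_of_lt (l - i).isLt))
      rw [Nat.mod_eq_of_lt h4] at h3
      omega

theorem rb_char' (he : ∀ m : Fin p, f (e m) = e (m + 1)) (x y z : Fin M) :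
    ReachesBefore f x y z ↔ (e.symm y - e.symm x).val < (e.symm z - e.symm x).val := by
  have hx : x = e (e.symm x) := (e.apply_symm_apply x).symm
  have hy : y = e (e.symm y) := (e.apply_symm_apply y).symm
  have hz : z = e (e.symm z) := (e.apply_symm_apply z).symm
  rw [hx, hy, hz, rb_char e f he]
  simp

theorem notCross_char (he : ∀ m : Fin p, f (e m) = e (m + 1)) (x x' y y' : Fin M) :
    ¬ ChordsCross f x x' y y' ↔
      ((e.symm y - e.symm x).val < (e.symm x' - e.symm x).val ↔
       (e.symm y' - e.symm x).val < (e.symm x' - e.symm x).val) := by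
  unfold ChordsCross
  rw [not_not, rb_char' e f he, rb_char' e f he]

theorem notCross_side (he : ∀ m : Fin p, f (e m) = e (m + 1)) {x x' y y' : Fin M}
    (h1 : y ≠ x) (h2 : y ≠ x') (h3 : y' ≠ x) (h4 : y' ≠ x') :
    ¬ ChordsCross f x x' y y' ↔
      (SideOf (e.symm x) (e.symm x') (e.symm y) ↔ SideOf (e.symm x) (e.symm x') (e.symm y')) := by
  rw [notCross_char e f he]
  have hinj : ∀ a b : Fin M, a ≠ b → e.symm a ≠ e.symm b := fun a b h hc => h (by
    have := congrArg e hc; simpa using this)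
  rw [sideOf_iff_lt (hinj _ _ h1) (hinj _ _ h2), sideOf_iff_lt (hinj _ _ h3) (hinj _ _ h4)]

theorem side0_compl {q : ℕ} (a b w : Fin q) (hab : a ≠ b) :
    ((w - a).val < (b - a).val ↔ ¬((w - b).val < (a - b).val)) := by
  have s1 := subval_spec w a
  have s2 := subval_spec b a
  have s3 := subval_spec w b
  have s4 := subval_spec a b
  have e1 := val_ne_of_ne hab
  omega

end CycleParam

namespace RibbonGraph
open Relation

variable {n : ℕ} (Γ : RibbonGraph n)

theorem s1s1 (x : Fin (2 * n)) : Γ.σ1 (Γ.σ1 x) = x := by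
  have h : (Γ.σ1 * Γ.σ1) x = (1 : Equiv.Perm (Fin (2 * n))) x := by rw [Γ.invol]
  simpa using h

theorem closed_mem_iff {A : Finset (Fin (2 * n))} (hA : Γ.Closed A) {x : Fin (2 * n)} :
    Γ.σ1 x ∈ A ↔ x ∈ A := by
  constructor
  · intro h
    have := hA _ h
    rwa [Γ.s1s1] at this
  · exact fun h => hA _ h

theorem bdry_bijective {A : Finset (Fin (2 * n))} (hA : Γ.Closed A) :
    Function.Bijective (Γ.bdryMap A) := by
  classical
  have hfn : Γ.bdryMap A = fun x => Γ.σ0 (if x ∈ A then Γ.σ1 x else x) := by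
    funext x
    unfold bdryMap
    split <;> rfl
  have hτ : Function.Involutive (fun x : Fin (2 * n) => if x ∈ A then Γ.σ1 x else x) := by
    intro x
    by_cases hx : x ∈ A
    · simp only [if_pos hx, if_pos ((Γ.closed_mem_iff hA).mpr hx), Γ.s1s1]
    · simp only [if_neg hx]
  rw [hfn]
  exact (Equiv.bijective Γ.σ0).comp hτ.bijective

theorem closed_card_even : ∀ (m : ℕ) (A : Finset (Fin (2 * n))), A.card = m → Γ.Closed A →
    ∃ k, A.card = 2 * k := by
  classical
  intro m
  induction m using Nat.strong_induction_on with
  | _ m ih =>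
    intro A hcard hA
    rcases A.eq_empty_or_nonempty with rfl | ⟨x, hx⟩
    · exact ⟨0, by simp⟩
    · have hxne : x ≠ Γ.σ1 x := (Γ.fixfree x).symm
      have hsub : ({x, Γ.σ1 x} : Finset (Fin (2 * n))) ⊆ A := by
        intro y hy
        rcases Finset.mem_insert.mp hy with rfl | hy
        · exact hx
        · rw [Finset.mem_singleton.mp hy]
          exact hA _ hx
      have hc2 : ({x, Γ.σ1 x} : Finset (Fin (2 * n))).card = 2 := by
        rw [Finset.card_insert_of_notMem (by simpa using hxne), Finset.card_singleton]
      have hA' : Γ.Closed (A \ {x, Γ.σ1 x}) := by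
        intro y hy
        obtain ⟨hyA, hyp⟩ := Finset.mem_sdiff.mp hy
        refine Finset.mem_sdiff.mpr ⟨hA _ hyA, ?_⟩
        intro hc
        rcases Finset.mem_insert.mp hc with hc | hc
        · apply hyp
          have : y = Γ.σ1 x := by rw [← Γ.s1s1 y, hc]
          simp [this]
        · apply hyp
          have : y = x := by
            have := Finset.mem_singleton.mp hc
            have h2 := congrArg Γ.σ1 this
            rwa [Γ.s1s1, Γ.s1s1] at h2
          simp [this]
      have hcard' : (A \ {x, Γ.σ1 x}).card = A.card - 2 := by
        rw [Finset.card_sdiff_of_subset hsub, hc2]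
      have hge : 2 ≤ A.card := by
        calc 2 = ({x, Γ.σ1 x} : Finset (Fin (2 * n))).card := hc2.symm
        _ ≤ A.card := Finset.card_le_card hsub
      have hxcard : 0 < A.card := by omega
      obtain ⟨k, hk⟩ := ih (A.card - 2) (by omega) _ hcard' hA'
      exact ⟨k + 1, by omega⟩

theorem closed_even {A : Finset (Fin (2 * n))} (hA : Γ.Closed A) : ∃ k, A.card = 2 * k :=
  Γ.closed_card_even A.card A rfl hA

theorem exists_cycle_param {A : Finset (Fin (2 * n))} (hAc : Γ.Closed A) (hf1 : Γ.faces A = 1) :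
    ∃ (p : ℕ) (hp : 0 < p) (e : Fin p ≃ Fin (2 * n)),
      ∀ m : Fin p, Γ.bdryMap A (e m) = e (m + ⟨1 % p, Nat.mod_lt _ hp⟩) := by
  classical
  set f := Γ.bdryMap A with hfdef
  set P := Equiv.ofBijective f (Γ.bdry_bijective hAc) with hPdef
  have hPcoe : ⇑P = f := rfl
  have hcard1 : Nat.card (Quot (OrbRel f)) = 1 := hf1
  obtain ⟨q0, hq0⟩ := Nat.card_eq_one_iff_exists.mp hcard1
  have hall : ∀ x y : Fin (2 * n), EqvGen (OrbRel f) x y := by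
    intro x y
    have : Quot.mk (OrbRel f) x = Quot.mk (OrbRel f) y := by
      rw [hq0 (Quot.mk _ x), hq0 (Quot.mk _ y)]
    exact Quot.eqvGen_exact this
  have hsc : ∀ x y : Fin (2 * n), ∃ m : ℕ, f^[m] x = y := by
    intro x y
    have hsame : Equiv.Perm.SameCycle P x y := by
      have h := hall x y
      clear hq0 hcard1
      induction h with
      | rel u v huv => exact ⟨1, by simpa [hPcoe] using huv.symm⟩
      | refl u => exact Equiv.Perm.SameCycle.refl P u
      | symm u v _ ih => exact Equiv.Perm.SameCycle.symm ih
      | trans u v w _ _ ih1 ih2 => exact Equiv.Perm.SameCycle.trans ih1 ih2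
    obtain ⟨i, _, hi⟩ := Equiv.Perm.SameCycle.exists_pow_eq' hsame
    refine ⟨i, ?_⟩
    rw [← hPcoe, Equiv.Perm.iterate_eq_pow]
    exact hi
  obtain ⟨x0, _⟩ := Quot.exists_rep q0
  have hper : x0 ∈ Function.periodicPts f := by
    refine ⟨orderOf P, orderOf_pos P, ?_⟩
    show f^[orderOf P] x0 = x0
    rw [← hPcoe, Equiv.Perm.iterate_eq_pow, pow_orderOf_eq_one]
    rfl
  set p := Function.minimalPeriod f x0 with hpdef
  have hp : 0 < p := Function.minimalPeriod_pos_of_mem_periodicPts hper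
  have hbij : Function.Bijective (fun m : Fin p => f^[m.val] x0) := by
    constructor
    · intro a b hab
      have := Function.iterate_injOn_Iio_minimalPeriod (f := f) (x := x0)
        (Set.mem_Iio.mpr a.isLt) (Set.mem_Iio.mpr b.isLt) hab
      exact Fin.ext this
    · intro y
      obtain ⟨m, hm⟩ := hsc x0 y
      refine ⟨⟨m % p, Nat.mod_lt _ hp⟩, ?_⟩
      show f^[m % p] x0 = y
      rw [Function.iterate_mod_minimalPeriod_eq]
      exact hm
  set e := Equiv.ofBijective _ hbij with hedef
  refine ⟨p, hp, e, ?_⟩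
  intro m
  have hem : e m = f^[m.val] x0 := rfl
  have he1 : e (m + ⟨1 % p, Nat.mod_lt _ hp⟩) = f^[(m + ⟨1 % p, Nat.mod_lt _ hp⟩).val] x0 := rfl
  rw [hem, he1, ← Function.iterate_succ_apply' f m.val x0]
  haveI : NeZero p := ⟨hp.ne'⟩
  have hone : (⟨1 % p, Nat.mod_lt _ hp⟩ : Fin p) = (1 : Fin p) := by
    apply Fin.ext
    simp [Fin.val_one']
  rw [hone]
  rcases addone_spec m with h | ⟨h1, h2⟩
  · rw [h]
  · rw [h1]
    rw [show (Nat.succ (m.val)) = p from h2]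
    rw [Function.iterate_zero_apply]
    exact (Function.iterate_minimalPeriod (f := f) (x := x0))

end RibbonGraph

namespace RibbonGraph
open Relation

variable {n : ℕ} (Γ : RibbonGraph n)

theorem edgeOrd_ne {u i : Fin (2 * n)} (h1 : u ≠ i) (h2 : u ≠ Γ.σ1 i) (h3 : Γ.σ1 u ≠ i)
    (h4 : Γ.σ1 u ≠ Γ.σ1 i) : Γ.edgeOrd u ≠ Γ.edgeOrd i := by
  have e1 := val_ne_of_ne h1
  have e2 := val_ne_of_ne h2
  have e3 := val_ne_of_ne h3
  have e4 := val_ne_of_ne h4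
  unfold edgeOrd
  rw [Nat.min_def, Nat.min_def]
  split_ifs <;> omega

theorem edgeOrd_s1 (u : Fin (2 * n)) : Γ.edgeOrd (Γ.σ1 u) = Γ.edgeOrd u := by
  unfold edgeOrd
  rw [Γ.s1s1]
  exact Nat.min_comm _ _

theorem crosses_flip {A : Finset (Fin (2 * n))} (hAc : Γ.Closed A) (hf1 : Γ.faces A = 1)
    (u j : Fin (2 * n)) : Γ.Crosses A (Γ.σ1 u) j ↔ Γ.Crosses A u j := by
  obtain ⟨p, hp, e, he0⟩ := Γ.exists_cycle_param hAc hf1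
  haveI : NeZero p := ⟨hp.ne'⟩
  have he : ∀ m : Fin p, Γ.bdryMap A (e m) = e (m + 1) := by
    intro m
    have h1 : (⟨1 % p, Nat.mod_lt _ hp⟩ : Fin p) = (1 : Fin p) := Fin.ext (by simp [Fin.val_one'])
    rw [he0 m, h1]
  have hcucs : e.symm u ≠ e.symm (Γ.σ1 u) := by
    intro hc
    have := congrArg e hc
    simp only [Equiv.apply_symm_apply] at this
    exact Γ.fixfree u this.symm
  show ChordsCross (Γ.bdryMap A) (Γ.σ1 u) (Γ.σ1 (Γ.σ1 u)) j (Γ.σ1 j) ↔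
    ChordsCross (Γ.bdryMap A) u (Γ.σ1 u) j (Γ.σ1 j)
  rw [Γ.s1s1]
  unfold ChordsCross
  rw [rb_char' e _ he, rb_char' e _ he, rb_char' e _ he, rb_char' e _ he]
  have hc1 := side0_compl (e.symm u) (e.symm (Γ.σ1 u)) (e.symm j) hcucs
  have hc2 := side0_compl (e.symm u) (e.symm (Γ.σ1 u)) (e.symm (Γ.σ1 j)) hcucs
  constructor
  · intro h hiff
    exact h (by tauto)
  · intro h hiff
    exact h (by tauto)

theorem live_s1 {A : Finset (Fin (2 * n))} (hAc : Γ.Closed A) (hf1 : Γ.faces A = 1)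
    (u : Fin (2 * n)) : Γ.Live A (Γ.σ1 u) ↔ Γ.Live A u := by
  unfold Live
  constructor
  · intro h j hj
    rw [← Γ.crosses_flip hAc hf1]
    exact h j (by rwa [Γ.edgeOrd_s1])
  · intro h j hj
    rw [Γ.crosses_flip hAc hf1]
    exact h j (by rwa [Γ.edgeOrd_s1] at hj)

theorem deadIn_closed {A : Finset (Fin (2 * n))} (hAc : Γ.Closed A) (hf1 : Γ.faces A = 1) :
    Γ.Closed (Γ.deadIn A) := by
  classical
  intro i hi
  unfold deadIn at *
  rw [Finset.mem_filter] at *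
  exact ⟨hAc _ hi.1, fun hl => hi.2 ((Γ.live_s1 hAc hf1 i).mp hl)⟩

theorem master {A B : Finset (Fin (2 * n))}
    (hAc : Γ.Closed A) (hf1 : Γ.faces A = 1) (hBc : Γ.Closed B)
    (hlive : ∀ i ∈ (A \ B) ∪ (B \ A), Γ.Live A i) :
    Γ.faces B = 1 + Γ.eCount ((A \ B) ∪ (B \ A)) ∧
    ∀ u : Fin (2 * n), Γ.Live A u → u ∉ (A \ B) ∪ (B \ A) → Γ.σ1 u ∉ (A \ B) ∪ (B \ A) →
      Quot.mk (fun i j => j = Γ.bdryMap B i) u =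
        Quot.mk (fun i j => j = Γ.bdryMap B i) (Γ.σ1 u) := by
  classical
  obtain ⟨p, hp, e, he0⟩ := Γ.exists_cycle_param hAc hf1
  haveI : NeZero p := ⟨hp.ne'⟩
  set f := Γ.bdryMap A with hfdef
  have he : ∀ m : Fin p, f (e m) = e (m + 1) := by
    intro m
    have h1 : (⟨1 % p, Nat.mod_lt _ hp⟩ : Fin p) = (1 : Fin p) := Fin.ext (by simp [Fin.val_one'])
    rw [he0 m, h1]
  have hesymm_inj : ∀ a b : Fin (2 * n), a ≠ b → e.symm a ≠ e.symm b := by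
    intro a b hab hc
    have := congrArg e hc
    simp only [Equiv.apply_symm_apply] at this
    exact hab this
  set Δ := (A \ B) ∪ (B \ A) with hΔ
  have hΔmem : ∀ x, x ∈ Δ ↔ ((x ∈ A ∧ x ∉ B) ∨ (x ∈ B ∧ x ∉ A)) := by
    intro x
    simp only [hΔ, Finset.mem_union, Finset.mem_sdiff]
  have hΔc : Γ.Closed Δ := by
    intro x hx
    rcases (hΔmem x).mp hx with ⟨h1, h2⟩ | ⟨h1, h2⟩
    · exact (hΔmem _).mpr (Or.inl ⟨hAc _ h1, fun hc => h2 ((Γ.closed_mem_iff hBc).mp hc)⟩)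
    · exact (hΔmem _).mpr (Or.inr ⟨hBc _ h1, fun hc => h2 ((Γ.closed_mem_iff hAc).mp hc)⟩)
  set Sfil := Δ.filter (fun i => i.val < (Γ.σ1 i).val) with hSfil
  set L := Sfil.toList.map (fun i => (e.symm i, e.symm (Γ.σ1 i))) with hL
  have hmemL : ∀ c, c ∈ L ↔
      ∃ i, (i ∈ Δ ∧ i.val < (Γ.σ1 i).val) ∧ c = (e.symm i, e.symm (Γ.σ1 i)) := by
    intro c
    rw [hL, List.mem_map]
    constructor
    · rintro ⟨i, hi, rfl⟩
      exact ⟨i, Finset.mem_filter.mp (Finset.mem_toList.mp hi), rfl⟩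
    · rintro ⟨i, hi, rfl⟩
      exact ⟨i, Finset.mem_toList.mpr (Finset.mem_filter.mpr hi), rfl⟩
  -- length of the chord list
  have hlen : L.length = Γ.eCount Δ := by
    rw [hL, List.length_map, Finset.length_toList]
    set Sgt := Δ.filter (fun i => ¬ i.val < (Γ.σ1 i).val) with hSgt
    have hsplit : Sfil.card + Sgt.card = Δ.card := by
      rw [hSfil, hSgt]
      exact Finset.card_filter_add_card_filter_not _
    have hbijc : Sgt.card = Sfil.card := by
      rw [hSgt]
      apply Finset.card_bij (fun i _ => Γ.σ1 i)
      · intro a ha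
        rw [Finset.mem_filter] at ha
        rw [hSfil, Finset.mem_filter]
        refine ⟨(Γ.closed_mem_iff hΔc).mpr ha.1, ?_⟩
        rw [Γ.s1s1]
        have := val_ne_of_ne (Γ.fixfree a)
        have h2 := ha.2
        omega
      · intro a _ b _ hab
        have := congrArg Γ.σ1 hab
        rwa [Γ.s1s1, Γ.s1s1] at this
      · intro b hb
        rw [hSfil, Finset.mem_filter] at hb
        refine ⟨Γ.σ1 b, ?_, Γ.s1s1 b⟩
        rw [Finset.mem_filter]
        refine ⟨(Γ.closed_mem_iff hΔc).mpr hb.1, ?_⟩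
        rw [Γ.s1s1]
        have h2 := hb.2
        omega
    unfold eCount
    omega
  -- disjointness of distinct chords
  have hedges : ∀ a b : Fin (2 * n), a ∈ Sfil → b ∈ Sfil → a ≠ b →
      a ≠ b ∧ a ≠ Γ.σ1 b ∧ Γ.σ1 a ≠ b ∧ Γ.σ1 a ≠ Γ.σ1 b := by
    intro a b ha hb hab
    rw [hSfil, Finset.mem_filter] at ha hb
    refine ⟨hab, ?_, ?_, fun hc => hab (by rw [← Γ.s1s1 a, hc, Γ.s1s1])⟩
    · intro hc
      have h2 : Γ.σ1 a = b := by rw [hc, Γ.s1s1]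
      have := ha.2
      have := hb.2
      rw [← h2] at hb
      rw [hc] at ha
      omega
    · intro hc
      have h2 : a = Γ.σ1 b := by rw [← hc, Γ.s1s1]
      have := ha.2
      have := hb.2
      rw [h2] at ha
      rw [← hc] at hb
      omega
  have hliveΔ : ∀ i ∈ Δ, Γ.Live A i := fun i hi => hlive i hi
  -- non-crossing of distinct chords, in coordinates
  have hsides : ∀ a b : Fin (2 * n), Γ.Live A a → Γ.Live A b →
      a ≠ b → a ≠ Γ.σ1 b → Γ.σ1 a ≠ b → Γ.σ1 a ≠ Γ.σ1 b →
      (SideOf (e.symm a) (e.symm (Γ.σ1 a)) (e.symm b) ↔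
        SideOf (e.symm a) (e.symm (Γ.σ1 a)) (e.symm (Γ.σ1 b))) := by
    intro a b hla hlb h1 h2 h3 h4
    have hord : Γ.edgeOrd b ≠ Γ.edgeOrd a :=
      Γ.edgeOrd_ne (Ne.symm h1) (Ne.symm h3) (Ne.symm h2) (Ne.symm h4)
    rcases lt_or_gt_of_ne hord with h | h
    · have hnx : ¬ Γ.Crosses A a b := hla b h
      exact (notCross_side e f he (Ne.symm h1) (Ne.symm h3) (Ne.symm h2) (Ne.symm h4)).mp hnx
    · have hnx : ¬ Γ.Crosses A b a := hlb a h
      have hside := (notCross_side e f he h1 h2 h3 h4).mp hnx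
      exact sideOf_symm (hesymm_inj _ _ (Γ.fixfree b).symm) (hesymm_inj _ _ (Γ.fixfree a).symm)
        (hesymm_inj _ _ (Ne.symm h1)) (hesymm_inj _ _ (Ne.symm h3))
        (hesymm_inj _ _ (Ne.symm h2)) (hesymm_inj _ _ (Ne.symm h4)) hside
  -- the chord list is good
  have hGood : GoodList L := by
    refine ⟨?_, ?_, ?_⟩
    · rw [hL]
      refine List.Nodup.map ?_ (Finset.nodup_toList _)
      intro a b hab
      have := congrArg Prod.fst hab
      simp only at this
      have := congrArg e this
      simpa using this
    · intro c hc
      obtain ⟨i, ⟨hiΔ, _⟩, rfl⟩ := (hmemL c).mp hc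
      exact hesymm_inj _ _ (Γ.fixfree i).symm
    · intro c hc d hd hcd
      obtain ⟨a, ⟨haΔ, halt⟩, rfl⟩ := (hmemL c).mp hc
      obtain ⟨b, ⟨hbΔ, hblt⟩, rfl⟩ := (hmemL d).mp hd
      have hab : a ≠ b := by
        intro hcc
        exact hcd (by rw [hcc])
      have haS : a ∈ Sfil := by rw [hSfil, Finset.mem_filter]; exact ⟨haΔ, halt⟩
      have hbS : b ∈ Sfil := by rw [hSfil, Finset.mem_filter]; exact ⟨hbΔ, hblt⟩
      obtain ⟨e1, e2, e3, e4⟩ := hedges a b haS hbS hab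
      constructor
      · exact ⟨hesymm_inj _ _ e1, hesymm_inj _ _ e2, hesymm_inj _ _ e3, hesymm_inj _ _ e4⟩
      · exact hsides a b (hliveΔ a haΔ) (hliveΔ b hbΔ) e1 e2 e3 e4
  -- boundary map of B via surgery
  have htauW : ∀ x, Γ.bdryMap B x = f (if x ∈ Δ then Γ.σ1 x else x) := by
    intro x
    rw [hfdef]
    unfold bdryMap
    by_cases hx : x ∈ Δ
    · rw [if_pos hx]
      rcases (hΔmem x).mp hx with ⟨h1, h2⟩ | ⟨h1, h2⟩
      · rw [if_neg h2, if_pos ((Γ.closed_mem_iff hAc).mpr h1), Γ.s1s1]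
      · rw [if_pos h1, if_neg (fun hc => h2 ((Γ.closed_mem_iff hAc).mp hc))]
    · rw [if_neg hx]
      have hiff : x ∈ B ↔ x ∈ A := by
        have hmm := hΔmem x
        by_cases hxa : x ∈ A <;> by_cases hxb : x ∈ B <;> tauto
      by_cases hxa : x ∈ A
      · rw [if_pos (hiff.mpr hxa), if_pos hxa]
      · rw [if_neg (fun hc => hxa (hiff.mp hc)), if_neg hxa]
  have hend : ∀ x : Fin (2 * n), x ∉ Δ → ¬ IsEnd L (e.symm x) := by
    rintro x hx ⟨c, hc, hor⟩
    obtain ⟨i, ⟨hiΔ, _⟩, rfl⟩ := (hmemL c).mp hc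
    rcases hor with h | h
    · have : x = i := by
        have := congrArg e h
        simpa using this
      exact hx (this ▸ hiΔ)
    · have : x = Γ.σ1 i := by
        have := congrArg e h
        simpa using this
      exact hx (this ▸ (Γ.closed_mem_iff hΔc).mpr hiΔ)
  have htauLW : ∀ x, e (tauL L (e.symm x)) = (if x ∈ Δ then Γ.σ1 x else x) := by
    intro x
    by_cases hx : x ∈ Δ
    · rw [if_pos hx]
      have hne := val_ne_of_ne (Γ.fixfree x)
      rcases Nat.lt_or_ge x.val (Γ.σ1 x).val with hlt | hge
      · have hxS : x ∈ Sfil := by rw [hSfil, Finset.mem_filter]; exact ⟨hx, hlt⟩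
        have hcL : (e.symm x, e.symm (Γ.σ1 x)) ∈ L :=
          (hmemL _).mpr ⟨x, ⟨hx, hlt⟩, rfl⟩
        have := (tauL_swap hGood hcL).1
        simp only at this
        rw [this]
        simp
      · have hlt2 : (Γ.σ1 x).val < (Γ.σ1 (Γ.σ1 x)).val := by rw [Γ.s1s1]; omega
        have hcL : (e.symm (Γ.σ1 x), e.symm (Γ.σ1 (Γ.σ1 x))) ∈ L :=
          (hmemL _).mpr ⟨Γ.σ1 x, ⟨(Γ.closed_mem_iff hΔc).mpr hx, hlt2⟩, rfl⟩
        rw [Γ.s1s1] at hcL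
        have := (tauL_swap hGood hcL).2
        simp only at this
        rw [this]
        simp
    · rw [if_neg hx, tauL_fix (hend x hx), Equiv.apply_symm_apply]
  have hconj : ∀ x, Γ.bdryMap B x = e ((rotN p * tauL L) (e.symm x)) := by
    intro x
    have h1 : (rotN p * tauL L) (e.symm x) = tauL L (e.symm x) + 1 := by
      show rotN p (tauL L (e.symm x)) = _
      simp [rotN, add_comm]
    rw [h1, show e (tauL L (e.symm x) + 1) = f (e (tauL L (e.symm x))) from (he _).symm,
      htauLW, htauW]
  set r := OrbRel ⇑(rotN p * tauL L) with hr
  set s := fun i j : Fin (2 * n) => j = Γ.bdryMap B i with hs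
  have hsound1 : ∀ a b : Fin p, r a b → Quot.mk s (e a) = Quot.mk s (e b) := by
    intro a b hab
    apply Quot.sound
    show e b = Γ.bdryMap B (e a)
    rw [hconj (e a), Equiv.symm_apply_apply]
    exact congrArg e hab
  have hsound2 : ∀ x y, s x y → Quot.mk r (e.symm x) = Quot.mk r (e.symm y) := by
    intro x y hxy
    apply Quot.sound
    show e.symm y = (rotN p * tauL L) (e.symm x)
    have : y = e ((rotN p * tauL L) (e.symm x)) := by rw [← hconj x]; exact hxy
    rw [this, Equiv.symm_apply_apply]
  let θ : Quot r → Quot s := Quot.lift (fun a => Quot.mk s (e a)) hsound1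
  let θ' : Quot s → Quot r := Quot.lift (fun x => Quot.mk r (e.symm x)) hsound2
  have happθ : ∀ a, θ (Quot.mk r a) = Quot.mk s (e a) := fun a => rfl
  have happθ' : ∀ x, θ' (Quot.mk s x) = Quot.mk r (e.symm x) := fun x => rfl
  have hθθ' : ∀ q, θ' (θ q) = q := by
    intro q
    induction q using Quot.ind with | _ a =>
    rw [happθ, happθ']
    exact congrArg (Quot.mk r) (Equiv.symm_apply_apply e a)
  have hθ'θ : ∀ q, θ (θ' q) = q := by
    intro q
    induction q using Quot.ind with | _ x =>
    rw [happθ', happθ]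
    exact congrArg (Quot.mk s) (Equiv.apply_symm_apply e x)
  have hcardeq : Nat.card (Quot s) = Nat.card (Quot r) :=
    Nat.card_congr ⟨θ', θ, hθ'θ, hθθ'⟩
  obtain ⟨hcount, hmkeq⟩ := core_count hGood
  constructor
  · show Nat.card (Quot s) = 1 + Γ.eCount Δ
    rw [hcardeq, hr] at *
    rw [hcount, hlen]
    omega
  · intro u hu huΔ hsΔ
    have hchi : chi L (e.symm u) = chi L (e.symm (Γ.σ1 u)) := by
      unfold chi
      rw [List.map_eq_map_iff]
      intro c hcL
      obtain ⟨i, ⟨hiΔ, hilt⟩, rfl⟩ := (hmemL c).mp hcL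
      rw [decide_eq_decide]
      have e1 : i ≠ u := fun h => huΔ (h ▸ hiΔ)
      have e2 : i ≠ Γ.σ1 u := fun h => hsΔ (h ▸ hiΔ)
      have e3 : Γ.σ1 i ≠ u := fun h => huΔ (h ▸ (Γ.closed_mem_iff hΔc).mpr hiΔ)
      have e4 : Γ.σ1 i ≠ Γ.σ1 u := fun h => hsΔ (h ▸ (Γ.closed_mem_iff hΔc).mpr hiΔ)
      exact hsides i u (hliveΔ i hiΔ) hu e1 e2 e3 e4
    have hmk := hmkeq (e.symm u) (e.symm (Γ.σ1 u)) hchi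
    have h2 := congrArg θ hmk
    have ha : θ (Quot.mk r (e.symm u)) = Quot.mk s u := by
      rw [happθ, Equiv.apply_symm_apply]
    have hb : θ (Quot.mk r (e.symm (Γ.σ1 u))) = Quot.mk s (Γ.σ1 u) := by
      rw [happθ, Equiv.apply_symm_apply]
    rw [ha, hb] at h2
    exact h2

end RibbonGraph

namespace RibbonGraph
open Relation

variable {n : ℕ} (Γ : RibbonGraph n)

theorem eqvGen_mono' {α : Type*} {r s : α → α → Prop} (h : ∀ a b, r a b → EqvGen s a b) :
    ∀ a b, EqvGen r a b → EqvGen s a b := by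
  intro a b hab
  induction hab with
  | rel u v huv => exact h u v huv
  | refl u => exact EqvGen.refl u
  | symm u v _ ih => exact EqvGen.symm _ _ ih
  | trans u v w _ _ ih1 ih2 => exact EqvGen.trans _ _ _ ih1 ih2

theorem bdry_step_comp {B : Finset (Fin (2 * n))} (x y : Fin (2 * n))
    (h : y = Γ.bdryMap B x) : EqvGen (Γ.compRel B) x y := by
  classical
  unfold bdryMap at h
  by_cases hx : x ∈ B
  · rw [if_pos hx] at h
    refine EqvGen.trans _ (Γ.σ1 x) _ (EqvGen.rel _ _ (Or.inr ⟨hx, rfl⟩)) ?_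
    exact EqvGen.rel _ _ (Or.inl h)
  · rw [if_neg hx] at h
    exact EqvGen.rel _ _ (Or.inl h)

theorem eCount_union {X Y : Finset (Fin (2 * n))} (hX : Γ.Closed X) (hY : Γ.Closed Y)
    (hd : Disjoint X Y) : Γ.eCount (X ∪ Y) = Γ.eCount X + Γ.eCount Y := by
  unfold eCount
  rw [Finset.card_union_of_disjoint hd]
  obtain ⟨kx, hx⟩ := Γ.closed_even hX
  obtain ⟨ky, hy⟩ := Γ.closed_even hY
  omega

end RibbonGraph

theorem stmt9' {n : ℕ} (Γ : RibbonGraph n)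
    (A : Finset (Fin (2 * n))) (hA : Γ.IsQuasiTree A)
    (S1 S2 : Finset (Fin (2 * n)))
    (hS1 : ∀ i ∈ S1, i ∈ A ∧ Γ.Live A i) (hS1c : Γ.Closed S1)
    (hS2 : ∀ i ∈ S2, i ∉ A ∧ Γ.Live A i) (hS2c : Γ.Closed S2) :
    Γ.kComp (Γ.deadIn A ∪ S1 ∪ S2) = Γ.kComp (Γ.deadIn A ∪ S1) ∧
    Γ.nullity (Γ.deadIn A ∪ S1 ∪ S2) = Γ.nullity (Γ.deadIn A ∪ S1) + (Γ.eCount S2 : ℤ) ∧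
    Γ.twoGenus (Γ.deadIn A ∪ S1 ∪ S2) = Γ.twoGenus (Γ.deadIn A ∪ S1) := by
  classical
  open Relation in
  obtain ⟨hAc, hk1, hf1⟩ := hA
  set B1 := Γ.deadIn A ∪ S1 with hB1
  set B2 := Γ.deadIn A ∪ S1 ∪ S2 with hB2
  have hDc : Γ.Closed (Γ.deadIn A) := Γ.deadIn_closed hAc hf1
  have hDsub : Γ.deadIn A ⊆ A := Finset.filter_subset _ _
  have hB1c : Γ.Closed B1 := by
    intro x hx
    rcases Finset.mem_union.mp hx with h | h
    · exact Finset.mem_union_left _ (hDc _ h)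
    · exact Finset.mem_union_right _ (hS1c _ h)
  have hB2c : Γ.Closed B2 := by
    intro x hx
    rcases Finset.mem_union.mp hx with h | h
    · exact Finset.mem_union_left _ (hB1c _ h)
    · exact Finset.mem_union_right _ (hS2c _ h)
  have hB1A : B1 ⊆ A := by
    intro x hx
    rcases Finset.mem_union.mp hx with h | h
    · exact hDsub h
    · exact (hS1 x h).1
  have hS2A : ∀ i ∈ S2, i ∉ A := fun i hi => (hS2 i hi).1
  have hS2B1 : Disjoint B1 S2 := by
    rw [Finset.disjoint_left]
    intro x hx hx2
    exact hS2A x hx2 (hB1A hx)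
  have hΔ1eq : (A \ B1) ∪ (B1 \ A) = A \ B1 := by
    have : B1 \ A = ∅ := Finset.sdiff_eq_empty_iff_subset.mpr hB1A
    rw [this, Finset.union_empty]
  have hΔ2eq : (A \ B2) ∪ (B2 \ A) = (A \ B1) ∪ S2 := by
    ext x
    have hx1 : x ∈ B2 ↔ x ∈ B1 ∨ x ∈ S2 := by
      rw [hB2, hB1]
      exact Finset.mem_union
    have hx2 : x ∈ B1 → x ∈ A := fun h => hB1A h
    have hx3 : x ∈ S2 → x ∉ A := hS2A x
    simp only [Finset.mem_union, Finset.mem_sdiff]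
    constructor
    · rintro (⟨h1, h2⟩ | ⟨h1, h2⟩)
      · exact Or.inl ⟨h1, fun hc => h2 (hx1.mpr (Or.inl hc))⟩
      · rcases hx1.mp h1 with h | h
        · exact absurd (hx2 h) h2
        · exact Or.inr h
    · rintro (⟨h1, h2⟩ | h)
      · refine Or.inl ⟨h1, fun hc => ?_⟩
        rcases hx1.mp hc with hc | hc
        · exact h2 hc
        · exact hx3 hc h1
      · exact Or.inr ⟨hx1.mpr (Or.inr h), hx3 h⟩
  have hliveAB1 : ∀ i ∈ A \ B1, Γ.Live A i := by
    intro i hi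
    obtain ⟨hiA, hiB⟩ := Finset.mem_sdiff.mp hi
    have hiD : i ∉ Γ.deadIn A := fun h => hiB (Finset.mem_union_left _ h)
    unfold RibbonGraph.deadIn at hiD
    rw [Finset.mem_filter] at hiD
    by_contra hnl
    exact hiD ⟨hiA, hnl⟩
  have hlive1 : ∀ i ∈ (A \ B1) ∪ (B1 \ A), Γ.Live A i := by
    rw [hΔ1eq]; exact hliveAB1
  have hlive2 : ∀ i ∈ (A \ B2) ∪ (B2 \ A), Γ.Live A i := by
    rw [hΔ2eq]
    intro i hi
    rcases Finset.mem_union.mp hi with h | h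
    · exact hliveAB1 i h
    · exact (hS2 i h).2
  have hM1 := Γ.master hAc hf1 hB1c hlive1
  have hM2 := Γ.master hAc hf1 hB2c hlive2
  have hAB1c : Γ.Closed (A \ B1) := by
    intro x hx
    obtain ⟨h1, h2⟩ := Finset.mem_sdiff.mp hx
    refine Finset.mem_sdiff.mpr ⟨hAc _ h1, fun hc => h2 ((Γ.closed_mem_iff hB1c).mp hc)⟩
  have hAB1S2 : Disjoint (A \ B1) S2 := by
    rw [Finset.disjoint_left]
    intro x hx hx2
    exact hS2A x hx2 (Finset.mem_sdiff.mp hx).1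
  have hf2 : Γ.faces B2 = 1 + (Γ.eCount (A \ B1) + Γ.eCount S2) := by
    rw [hM2.1, hΔ2eq, Γ.eCount_union hAB1c hS2c hAB1S2]
  have hfB1 : Γ.faces B1 = 1 + Γ.eCount (A \ B1) := by
    rw [hM1.1, hΔ1eq]
  -- edge counts
  have hec : Γ.eCount B2 = Γ.eCount B1 + Γ.eCount S2 := by
    rw [hB2]
    exact Γ.eCount_union hB1c hS2c hS2B1
  -- component counts
  have hkc : Γ.kComp B2 = Γ.kComp B1 := by
    show Nat.card (Quot (Γ.compRel B2)) = Nat.card (Quot (Γ.compRel B1))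
    apply quotCard_eq_of_iff
    · intro x y hxy
      rcases hxy with h | ⟨hx, hy⟩
      · exact Relation.EqvGen.rel _ _ (Or.inl h)
      · rcases Finset.mem_union.mp hx with hxB | hxS
        · exact Relation.EqvGen.rel _ _ (Or.inr ⟨hxB, hy⟩)
        · -- x ∈ S2 : use the master orbit fact
          have hxA : x ∉ A := hS2A x hxS
          have hq := hM1.2 x (hS2 x hxS).2
            (by rw [hΔ1eq]; exact fun hc => hxA (Finset.mem_sdiff.mp hc).1)
            (by
              rw [hΔ1eq]
              intro hc
              exact ((Γ.closed_mem_iff hAc).not.mpr hxA) (Finset.mem_sdiff.mp hc).1)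
          have hEq : Relation.EqvGen (fun i j => j = Γ.bdryMap B1 i) x (Γ.σ1 x) :=
            Quot.eqvGen_exact hq
          have hfin : Relation.EqvGen (Γ.compRel B1) x (Γ.σ1 x) :=
            RibbonGraph.eqvGen_mono' (fun a b hab => Γ.bdry_step_comp a b hab) _ _ hEq
          rw [hy]
          exact hfin
    · intro x y hxy
      rcases hxy with h | ⟨hx, hy⟩
      · exact Relation.EqvGen.rel _ _ (Or.inl h)
      · exact Relation.EqvGen.rel _ _ (Or.inr ⟨Finset.mem_union_left _ hx, hy⟩)
  refine ⟨hkc, ?_, ?_⟩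
  · unfold RibbonGraph.nullity
    rw [hkc, hec]
    push_cast
    ring
  · unfold RibbonGraph.twoGenus
    rw [hkc, hec, hf2, hfB1]
    push_cast
    ring

/-- For a quasi-tree `A` with internally dead subgraph `D = deadIn A`,
a set `S1` of internally live edges and a set `S2` of externally live edges:
`k(D ∪ S1 ∪ S2) = k(D ∪ S1)`, `n(D ∪ S1 ∪ S2) = n(D ∪ S1) + |S2|`, and
`g(D ∪ S1 ∪ S2) = g(D ∪ S1)`. -/
theorem stmt9 {n : ℕ} (Γ : RibbonGraph n) (hΓ : Γ.Connected)
    (A : Finset (Fin (2 * n))) (hA : Γ.IsQuasiTree A)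
    (S1 S2 : Finset (Fin (2 * n)))
    (hS1 : ∀ i ∈ S1, i ∈ A ∧ Γ.Live A i) (hS1c : Γ.Closed S1)
    (hS2 : ∀ i ∈ S2, i ∉ A ∧ Γ.Live A i) (hS2c : Γ.Closed S2) :
    Γ.kComp (Γ.deadIn A ∪ S1 ∪ S2) = Γ.kComp (Γ.deadIn A ∪ S1) ∧
    Γ.nullity (Γ.deadIn A ∪ S1 ∪ S2) = Γ.nullity (Γ.deadIn A ∪ S1) + (Γ.eCount S2 : ℤ) ∧
    Γ.twoGenus (Γ.deadIn A ∪ S1 ∪ S2) = Γ.twoGenus (Γ.deadIn A ∪ S1) := stmt9' Γ A hA S1 S2 hS1 hS1c hS2 hS2c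
end

section
/- Let Q be a quasi-tree of a connected ribbon graph Γ with internally dead subgraph D = D(Q), and let S₁ be a set of internally live edges. Let W be the spanning subgraph of the graph G_Q (vertices = components of D, edges = internally live edges of Q) with edge set S₁. Then n(D ∪ S₁) = n(D) + n(W) and g(D ∪ S₁) = g(D) + n(W). -/
open Equiv

namespace St10
open Relation
set_option linter.unusedSectionVars false
set_option maxHeartbeats 1000000

set_option linter.unusedSectionVars false
variable {α : Type*}
def Rel (f : α → α) : α → α → Prop := fun i j => j = f i
def SO (f : α → α) : α → α → Prop := Relation.EqvGen (Rel f)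
theorem SO.refl (f : α → α) (x : α) : SO f x x := EqvGen.refl x
theorem SO.symm {f : α → α} {x y : α} (h : SO f x y) : SO f y x := EqvGen.symm _ _ h
theorem SO.trans {f : α → α} {x y z : α} (h : SO f x y) (h' : SO f y z) : SO f x z :=
  EqvGen.trans _ _ _ h h'
theorem SO.step (f : α → α) (x : α) : SO f x (f x) := EqvGen.rel _ _ rfl
theorem SO.iter (f : α → α) (x : α) (m : ℕ) : SO f x (f^[m] x) := by
  induction m with
  | zero => exact SO.refl f x
  | succ k ih =>
      rw [Function.iterate_succ_apply']
      exact ih.trans (SO.step f _)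
theorem mk_eq_iff {f : α → α} {x y : α} :
    Quot.mk (Rel f) x = Quot.mk (Rel f) y ↔ SO f x y :=
  ⟨fun h => Quot.eqvGen_exact h, fun h => Quot.eqvGen_sound h⟩
theorem SO.mono {f g : α → α} (h : ∀ x y, Rel f x y → SO g x y) {x y : α}
    (hxy : SO f x y) : SO g x y := by
  induction hxy with
  | rel a b hab => exact h a b hab
  | refl a => exact SO.refl g a
  | symm a b _ ih => exact ih.symm
  | trans a b c _ _ ih1 ih2 => exact ih1.trans ih2

section Perm
variable [Fintype α] [DecidableEq α]

theorem exists_iterate_of_SO {g : Perm α} {x y : α} (h : SO (⇑g) x y) :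
    ∃ m : ℕ, g^[m] x = y := by
  obtain ⟨q, hq0, hq⟩ : ∃ q : ℕ, 0 < q ∧ g ^ q = 1 :=
    ⟨orderOf g, orderOf_pos g, pow_orderOf_eq_one g⟩
  have hqid : ∀ z : α, g^[q] z = z := by
    intro z
    have : ⇑(g ^ q) z = z := by rw [hq]; rfl
    rwa [Equiv.Perm.coe_pow] at this
  induction h with
  | rel a b hab => exact ⟨1, hab.symm⟩
  | refl a => exact ⟨0, rfl⟩
  | symm a b _ ih =>
      obtain ⟨m, hm⟩ := ih
      refine ⟨m * q - m, ?_⟩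
      have hmq : m ≤ m * q := Nat.le_mul_of_pos_right m hq0
      have hiter : ∀ t : ℕ, g^[t * q] a = a := by
        intro t
        induction t with
        | zero => simp
        | succ s ih2 =>
            rw [Nat.succ_mul, Function.iterate_add_apply, hqid, ih2]
      calc g^[m * q - m] b = g^[m * q - m] (g^[m] a) := by rw [hm]
    _ = g^[m * q - m + m] a := (Function.iterate_add_apply _ _ _ _).symm
    _ = a := by rw [Nat.sub_add_cancel hmq, hiter]
  | trans a b c _ _ ih1 ih2 =>
      obtain ⟨m1, h1⟩ := ih1
      obtain ⟨m2, h2⟩ := ih2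
      exact ⟨m2 + m1, by rw [Function.iterate_add_apply, h1, h2]⟩

theorem so_iff_iterate {g : Perm α} {x y : α} :
    SO (⇑g) x y ↔ ∃ m : ℕ, g^[m] x = y :=
  ⟨exists_iterate_of_SO, fun ⟨m, hm⟩ => hm ▸ SO.iter (⇑g) x m⟩

variable {g : Perm α} {a b : α}

/-- one new-step is within old orbits, given a,b in the same old orbit -/
theorem so_swap_subset (hso : SO (⇑g) a b) {x y : α}
    (h : SO (⇑(g * Equiv.swap a b)) x y) : SO (⇑g) x y := by
  refine h.mono ?_
  rintro u v rfl
  show SO (⇑g) u (g (Equiv.swap a b u))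
  rcases eq_or_ne u a with rfl | hua
  · rw [Equiv.swap_apply_left]
    exact hso.trans (SO.step _ b)
  rcases eq_or_ne u b with rfl | hub
  · rw [Equiv.swap_apply_right]
    exact (hso.symm).trans (SO.step _ a)
  · rw [Equiv.swap_apply_of_ne_of_ne hua hub]
    exact SO.step _ u

/-- outside the orbit of a, old orbits are preserved -/
theorem so_swap_outside (hso : SO (⇑g) a b) {x y : α} (hxa : ¬ SO (⇑g) x a)
    (h : SO (⇑g) x y) : SO (⇑(g * Equiv.swap a b)) x y := by
  obtain ⟨m, hm⟩ := exists_iterate_of_SO h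
  subst hm
  clear h
  induction m with
  | zero => exact SO.refl _ x
  | succ k ih =>
      rw [Function.iterate_succ_apply']
      refine ih.trans ?_
      set z := g^[k] x with hz
      have hza : z ≠ a := by
        rintro rfl
        exact hxa (SO.iter (⇑g) x k)
      have hzb : z ≠ b := by
        rintro rfl
        exact hxa ((SO.iter (⇑g) x k).trans hso.symm)
      have : g z = (g * Equiv.swap a b) z := by
        simp [Equiv.Perm.mul_apply, Equiv.swap_apply_of_ne_of_ne hza hzb]
      rw [this]
      exact SO.step _ z

/-- dichotomy: every element of the orbit of a is g'-related to a or to b -/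
theorem so_swap_dichotomy (hso : SO (⇑g) a b) {x : α} (hxa : SO (⇑g) a x) :
    SO (⇑(g * Equiv.swap a b)) x a ∨ SO (⇑(g * Equiv.swap a b)) x b := by
  set g' := g * Equiv.swap a b with hg'
  obtain ⟨m, hm⟩ := exists_iterate_of_SO hxa
  subst hm
  clear hxa
  induction m with
  | zero => exact Or.inl (SO.refl _ a)
  | succ k ih =>
      rw [Function.iterate_succ_apply']
      set z := g^[k] a with hz
      rcases eq_or_ne z a with hza | hza
      · right
        rw [hza]
        have : g a = g' b := by simp [hg', Equiv.Perm.mul_apply]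
        rw [this]
        exact (SO.step (⇑g') b).symm
      rcases eq_or_ne z b with hzb | hzb
      · left
        rw [hzb]
        have : g b = g' a := by simp [hg', Equiv.Perm.mul_apply]
        rw [this]
        exact (SO.step (⇑g') a).symm
      · have : g z = g' z := by
          simp [hg', Equiv.Perm.mul_apply, Equiv.swap_apply_of_ne_of_ne hza hzb]
        rw [this]
        rcases ih with h | h
        · exact Or.inl (((SO.step (⇑g') z).symm).trans h)
        · exact Or.inr (((SO.step (⇑g') z).symm).trans h)

/-- orbit counting: splitting at a chord with both ends in the same orbit,
    provided the ends get disconnected. -/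
theorem orbCount_split (hab : a ≠ b) (hso : SO (⇑g) a b)
    (hnso : ¬ SO (⇑(g * Equiv.swap a b)) a b) :
    Nat.card (Quot (Rel (⇑(g * Equiv.swap a b)))) = Nat.card (Quot (Rel (⇑g))) + 1 := by
  classical
  set g' := g * Equiv.swap a b with hg'
  set X := Quot (Rel (⇑g')) with hX
  set Y := Quot (Rel (⇑g)) with hY
  have hfinX : Finite X := Quot.finite _
  have hfinY : Finite Y := Quot.finite _
  set x0 : X := Quot.mk _ b with hx0
  -- the map π
  have hπw : ∀ u v, Rel (⇑g') u v → Quot.mk (Rel (⇑g)) u = Quot.mk (Rel (⇑g)) v := by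
    intro u v huv
    exact mk_eq_iff.mpr (so_swap_subset hso (EqvGen.rel _ _ huv))
  set π : X → Y := Quot.lift (Quot.mk (Rel (⇑g))) hπw with hπ
  have hπmk : ∀ u : α, π (Quot.mk _ u) = Quot.mk _ u := fun u => rfl
  -- bijection from {q : X // q ≠ x0} to Y
  have hbij : Function.Bijective (fun q : {q : X // q ≠ x0} => π q.val) := by
    constructor
    · rintro ⟨q1, hq1⟩ ⟨q2, hq2⟩ h
      obtain ⟨u1, rfl⟩ := Quot.exists_rep q1
      obtain ⟨u2, rfl⟩ := Quot.exists_rep q2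
      simp only [hπmk] at h
      have h12 : SO (⇑g) u1 u2 := mk_eq_iff.mp h
      rcases Classical.em (SO (⇑g) u1 a) with hu1a | hu1a
      · have hu1' : SO (⇑g') u1 a := by
          rcases so_swap_dichotomy hso hu1a.symm with h' | h'
          · exact h'
          · exact absurd (mk_eq_iff.mpr h') hq1
        have hu2a : SO (⇑g) u2 a := h12.symm.trans hu1a
        have hu2' : SO (⇑g') u2 a := by
          rcases so_swap_dichotomy hso hu2a.symm with h' | h'
          · exact h'
          · exact absurd (mk_eq_iff.mpr h') hq2
        exact Subtype.ext (mk_eq_iff.mpr (hu1'.trans hu2'.symm))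
      · exact Subtype.ext (mk_eq_iff.mpr (so_swap_outside hso hu1a h12))
    · intro y
      obtain ⟨u, rfl⟩ := Quot.exists_rep y
      rcases Classical.em (SO (⇑g) u a) with hua | hua
      · refine ⟨⟨Quot.mk _ a, ?_⟩, ?_⟩
        · intro h
          exact hnso (mk_eq_iff.mp h)
        · simpa [hπmk] using mk_eq_iff.mpr hua.symm
      · refine ⟨⟨Quot.mk _ u, ?_⟩, rfl⟩
        intro h
        have : SO (⇑g') u b := mk_eq_iff.mp h
        exact hua ((so_swap_subset hso this).trans hso.symm)
  -- conclude cardinalities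
  have hYcard : Nat.card Y = Nat.card {q : X // q ≠ x0} := (Nat.card_eq_of_bijective _ hbij).symm
  have h1 : Nat.card {q : X // q = x0} = 1 := by
    haveI : Unique {q : X // q = x0} := ⟨⟨⟨x0, rfl⟩⟩, by rintro ⟨q, rfl⟩; rfl⟩
    exact Nat.card_unique
  have hsplit : Nat.card {q : X // q = x0} + Nat.card {q : X // q ≠ x0} = Nat.card X := by
    classical
    have e := Equiv.sumCompl (fun q : X => q = x0)
    have := Nat.card_congr e
    rw [Nat.card_sum] at this
    exact this
  rw [hYcard] at *
  omega

end Perm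
variable {p : ℕ} [NeZero p]

/-- cyclic distance from `a` to `x` -/
def dst (a x : ZMod p) : ℕ := (x - a).val

theorem dst_lt (a x : ZMod p) : dst a x < p := ZMod.val_lt _
theorem dst_self (a : ZMod p) : dst a a = 0 := by simp [dst]
theorem dst_eq_zero_iff {a x : ZMod p} : dst a x = 0 ↔ x = a := by
  rw [dst, ZMod.val_eq_zero, sub_eq_zero]
theorem dst_inj {a x y : ZMod p} (h : dst a x = dst a y) : x = y := by
  have hx := ZMod.natCast_rightInverse (n := p) (x - a)
  have hy := ZMod.natCast_rightInverse (n := p) (y - a)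
  have : x - a = y - a := by
    rw [← hx, ← hy]; exact_mod_cast congrArg (Nat.cast : ℕ → ZMod p) h
  exact sub_left_injective this
theorem dst_add_dst (c a x : ZMod p) :
    dst c a + dst a x = dst c x ∨ dst c a + dst a x = dst c x + p := by
  have key : dst c x = (dst c a + dst a x) % p := by
    have : x - c = (a - c) + (x - a) := by ring
    rw [dst, this, ZMod.val_add]; rfl
  have h1 := dst_lt c a
  have h2 := dst_lt a x
  have h3 := dst_lt c x
  rcases Nat.lt_or_ge (dst c a + dst a x) p with h | h
  · left; rw [key, Nat.mod_eq_of_lt h]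
  · right
    have h4 : (dst c a + dst a x) % p = (dst c a + dst a x - p) % p := Nat.mod_eq_sub_mod h
    have h5 : dst c a + dst a x - p < p := by omega
    rw [Nat.mod_eq_of_lt h5] at h4
    omega

theorem dst_succ [Fact (1 < p)] (a x : ZMod p) :
    dst a (x + 1) = dst a x + 1 ∨ (dst a x = p - 1 ∧ dst a (x + 1) = 0) := by
  have h := dst_add_dst a x (x + 1)
  have h1 : dst x (x + 1) = 1 := by
    rw [dst]; simp [ZMod.val_one]
  rw [h1] at h
  have h2 := dst_lt a x
  have h3 := dst_lt a (x + 1)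
  have hp : 1 < p := Fact.out
  omega

/-- side of `x` w.r.t. the chord `(a, b)` -/
def sd (a b x : ZMod p) : Prop := dst a x < dst a b

/-- adjusted side: endpoints are assigned to their split orbit -/
def sd' (a b x : ZMod p) : Prop := if x = a then False else if x = b then True else sd a b x

/-- the chord `(a,b)` separates `x` from `y` -/
def Sep (a b x y : ZMod p) : Prop := ¬ (sd a b x ↔ sd a b y)

theorem sd'_iff {a b x : ZMod p} (hab : a ≠ b) :
    sd' a b x ↔ (0 < dst a x ∧ dst a x ≤ dst a b) := by
  have hA1 : dst a b ≠ 0 := fun h => hab.symm (dst_eq_zero_iff.mp h)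
  rcases eq_or_ne x a with hxa | hxa
  · rw [hxa]
    simp [sd', dst_self]
  rcases eq_or_ne x b with hxb | hxb
  · rw [hxb]
    have hba : b ≠ a := fun h => hab h.symm
    simp only [sd', if_neg hba, if_pos rfl]
    refine ⟨fun _ => ?_, fun _ => trivial⟩
    omega
  · have hx0 : dst a x ≠ 0 := fun h => hxa (dst_eq_zero_iff.mp h)
    have hxA : dst a x ≠ dst a b := fun h => hxb (dst_inj h)
    simp only [sd', if_neg hxa, if_neg hxb, sd]
    omega

/-- key step lemma: the adjusted side w.r.t. chord (a,b) is invariant under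
the boundary map (swap-product followed by successor). -/
theorem side_step [Fact (1 < p)] {a b : ZMod p} (hab : a ≠ b) (τ : ZMod p → ZMod p)
    (hτa : τ a = b) (hτb : τ b = a)
    (hτ : ∀ z, z ≠ a → z ≠ b → (sd a b (τ z) ↔ sd a b z)) :
    ∀ z, sd' a b (τ z + 1) ↔ sd' a b z := by
  intro z
  have hp : 1 < p := Fact.out
  have hA1 : dst a b ≠ 0 := fun h => hab.symm (dst_eq_zero_iff.mp h)
  have hAp := dst_lt a b
  have hdw := dst_lt a (τ z)
  have hdu := dst_lt a (τ z + 1)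
  have hdz := dst_lt a z
  have hsucc := dst_succ a (τ z)
  rw [sd'_iff hab, sd'_iff hab]
  rcases eq_or_ne z a with hza | hza
  · have hW : dst a (τ z) = dst a b := by rw [hza, hτa]
    have hZ : dst a z = 0 := by rw [hza, dst_self]
    omega
  rcases eq_or_ne z b with hzb | hzb
  · have hW : dst a (τ z) = 0 := by rw [hzb, hτb, dst_self]
    have hZ : dst a z = dst a b := by rw [hzb]
    omega
  · have hside : sd a b (τ z) ↔ sd a b z := hτ z hza hzb
    have hz0 : dst a z ≠ 0 := fun h => hza (dst_eq_zero_iff.mp h)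
    have hzA : dst a z ≠ dst a b := fun h => hzb (dst_inj h)
    simp only [sd] at hside
    omega



section SwapProd
variable {γ : Type*} {δ : Type*} [DecidableEq γ] [DecidableEq δ]

/-- product of the swaps of a list of pairs -/
def spF (l : List (γ × γ)) : Equiv.Perm γ :=
  l.foldr (fun cd t => t * Equiv.swap cd.1 cd.2) 1

/-- `x` is an endpoint of a pair of `l` -/
def isEpF (l : List (γ × γ)) (x : γ) : Prop := ∃ cd ∈ l, x = cd.1 ∨ x = cd.2

/-- disjointness of two pairs -/
def Disjp (c d : γ × γ) : Prop := c.1 ≠ d.1 ∧ c.1 ≠ d.2 ∧ c.2 ≠ d.1 ∧ c.2 ≠ d.2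

theorem spF_not_ep {l : List (γ × γ)} {z : γ} (hz : ¬ isEpF l z) :
    spF l z = z := by
  induction l with
  | nil => rfl
  | cons cd l ih =>
      have h1 : z ≠ cd.1 := fun h => hz ⟨cd, List.mem_cons_self, Or.inl h⟩
      have h2 : z ≠ cd.2 := fun h => hz ⟨cd, List.mem_cons_self, Or.inr h⟩
      have h3 : ¬ isEpF l z := fun ⟨ef, hef, h⟩ => hz ⟨ef, List.mem_cons_of_mem _ hef, h⟩
      show (spF l * Equiv.swap cd.1 cd.2) z = z
      rw [Equiv.Perm.mul_apply, Equiv.swap_apply_of_ne_of_ne h1 h2, ih h3]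

theorem spF_ep {l : List (γ × γ)} (hL : l.Pairwise Disjp)
    {cd : γ × γ} (hcd : cd ∈ l) :
    spF l cd.1 = cd.2 ∧ spF l cd.2 = cd.1 := by
  induction l with
  | nil => cases hcd
  | cons ef l ih =>
      have hpw := (List.pairwise_cons.mp hL).1
      have htail := (List.pairwise_cons.mp hL).2
      rcases List.mem_cons.mp hcd with h | hcd
      · subst h
        have h1 : ¬ isEpF l cd.2 := by
          rintro ⟨gh, hgh, h | h⟩
          · exact (hpw gh hgh).2.2.1 h
          · exact (hpw gh hgh).2.2.2 h
        have h2 : ¬ isEpF l cd.1 := by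
          rintro ⟨gh, hgh, h | h⟩
          · exact (hpw gh hgh).1 h
          · exact (hpw gh hgh).2.1 h
        constructor
        · show (spF l * Equiv.swap cd.1 cd.2) cd.1 = cd.2
          rw [Equiv.Perm.mul_apply, Equiv.swap_apply_left, spF_not_ep h1]
        · show (spF l * Equiv.swap cd.1 cd.2) cd.2 = cd.1
          rw [Equiv.Perm.mul_apply, Equiv.swap_apply_right, spF_not_ep h2]
      · have hne := hpw cd hcd
        have h1 : cd.1 ≠ ef.1 := fun h => hne.1 h.symm
        have h2 : cd.1 ≠ ef.2 := fun h => hne.2.2.1 h.symm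
        have h3 : cd.2 ≠ ef.1 := fun h => hne.2.1 h.symm
        have h4 : cd.2 ≠ ef.2 := fun h => hne.2.2.2 h.symm
        constructor
        · show (spF l * Equiv.swap ef.1 ef.2) cd.1 = cd.2
          rw [Equiv.Perm.mul_apply, Equiv.swap_apply_of_ne_of_ne h1 h2, (ih htail hcd).1]
        · show (spF l * Equiv.swap ef.1 ef.2) cd.2 = cd.1
          rw [Equiv.Perm.mul_apply, Equiv.swap_apply_of_ne_of_ne h3 h4, (ih htail hcd).2]

theorem swap_map (E : γ ≃ δ) (a b x : γ) :
    E (Equiv.swap a b x) = Equiv.swap (E a) (E b) (E x) := by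
  rcases eq_or_ne x a with rfl | hxa
  · rw [Equiv.swap_apply_left, Equiv.swap_apply_left]
  rcases eq_or_ne x b with rfl | hxb
  · rw [Equiv.swap_apply_right, Equiv.swap_apply_right]
  · rw [Equiv.swap_apply_of_ne_of_ne hxa hxb,
      Equiv.swap_apply_of_ne_of_ne (fun h => hxa (E.injective h)) (fun h => hxb (E.injective h))]

theorem spF_map (E : γ ≃ δ) (l : List (γ × γ)) (z : γ) :
    E (spF l z) = spF (l.map (fun cd => (E cd.1, E cd.2))) (E z) := by
  induction l generalizing z with
  | nil => rfl
  | cons cd l ih =>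
      show E ((spF l * Equiv.swap cd.1 cd.2) z) = (spF (l.map (fun cd => (E cd.1, E cd.2))) *
        Equiv.swap (E cd.1) (E cd.2)) (E z)
      rw [Equiv.Perm.mul_apply, Equiv.Perm.mul_apply, ← swap_map, ih]

end SwapProd

section Master
variable {p : ℕ} [NeZero p]

/-- product of the swaps of a list of chords -/
def spL (L : List (ZMod p × ZMod p)) : Perm (ZMod p) := spF L

/-- the boundary permutation of the complement of the chords -/
def gL (L : List (ZMod p × ZMod p)) : Perm (ZMod p) := Equiv.addRight 1 * spL L

/-- `x` is an endpoint of a chord of `L` -/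
def isEp (L : List (ZMod p × ZMod p)) (x : ZMod p) : Prop := ∃ cd ∈ L, x = cd.1 ∨ x = cd.2

theorem sd'_of_ne' {a b x : ZMod p} (hxa : x ≠ a) (hxb : x ≠ b) :
    sd' a b x ↔ sd a b x := by simp [sd', hxa, hxb]

theorem Sep.notIff {a b x y : ZMod p} (h : ¬ Sep a b x y) : (sd a b x ↔ sd a b y) :=
  Classical.not_not.mp h

/-- two disjoint non-crossing chords -/
def ChordRel (c d : ZMod p × ZMod p) : Prop :=
  c.1 ≠ d.1 ∧ c.1 ≠ d.2 ∧ c.2 ≠ d.1 ∧ c.2 ≠ d.2 ∧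
    ¬ Sep c.1 c.2 d.1 d.2 ∧ ¬ Sep d.1 d.2 c.1 c.2

/-- a good family of chords: proper, pairwise disjoint and non-crossing -/
def Good (L : List (ZMod p × ZMod p)) : Prop :=
  (∀ cd ∈ L, cd.1 ≠ cd.2) ∧ L.Pairwise ChordRel

theorem chordRel_disjp : ∀ {c d : ZMod p × ZMod p}, ChordRel c d → Disjp c d :=
  fun h => ⟨h.1, h.2.1, h.2.2.1, h.2.2.2.1⟩

theorem spL_not_ep {L : List (ZMod p × ZMod p)} {z : ZMod p} (hz : ¬ isEp L z) :
    spL L z = z := spF_not_ep hz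

theorem spL_ep {L : List (ZMod p × ZMod p)} (hL : L.Pairwise ChordRel)
    {cd : ZMod p × ZMod p} (hcd : cd ∈ L) :
    spL L cd.1 = cd.2 ∧ spL L cd.2 = cd.1 :=
  spF_ep (hL.imp chordRel_disjp) hcd

theorem gL_apply (L : List (ZMod p × ZMod p)) (z : ZMod p) : gL L z = spL L z + 1 := rfl

theorem gL_cons (cd : ZMod p × ZMod p) (L : List (ZMod p × ZMod p)) :
    gL (cd :: L) = gL L * Equiv.swap cd.1 cd.2 := by
  show Equiv.addRight 1 * (spL L * Equiv.swap cd.1 cd.2) = _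
  rw [← mul_assoc]; rfl

theorem rot_iterate (m : ℕ) (x : ZMod p) : (⇑(Equiv.addRight (1 : ZMod p)))^[m] x = x + m := by
  induction m with
  | zero => simp
  | succ k ih =>
      rw [Function.iterate_succ_apply', ih]
      show x + ↑k + 1 = x + ↑(k + 1)
      push_cast; ring

theorem so_rot (x y : ZMod p) : SO (⇑(Equiv.addRight (1 : ZMod p))) x y := by
  rw [so_iff_iterate]
  refine ⟨dst x y, ?_⟩
  rw [rot_iterate, dst]
  rw [ZMod.natCast_rightInverse (y - x)]
  ring

/-- invariance of adjusted side along the boundary map -/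
theorem side_invariant [Fact (1 < p)] {L : List (ZMod p × ZMod p)} (hg : Good L)
    {cd : ZMod p × ZMod p} (hcd : cd ∈ L) {x y : ZMod p} (h : SO (⇑(gL L)) x y) :
    (sd' cd.1 cd.2 x ↔ sd' cd.1 cd.2 y) := by
  have hab : cd.1 ≠ cd.2 := hg.1 cd hcd
  have key : ∀ z, sd' cd.1 cd.2 (gL L z) ↔ sd' cd.1 cd.2 z := by
    have hsp := spL_ep hg.2 hcd
    refine fun z => side_step hab (⇑(spL L)) hsp.1 hsp.2 ?_ z
    intro w hw1 hw2
    rcases Classical.em (isEp L w) with hep | hep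
    · obtain ⟨ef, hef, hw⟩ := hep
      have hne : ef ≠ cd := by
        rintro rfl
        rcases hw with rfl | rfl
        · exact hw1 rfl
        · exact hw2 rfl
      have hrel : ChordRel cd ef := by
        have hsymm : Symmetric (ChordRel (p := p)) := by
          rintro c d ⟨h1, h2, h3, h4, h5, h6⟩
          exact ⟨fun h => h1 h.symm, fun h => h3 h.symm, fun h => h2 h.symm,
            fun h => h4 h.symm, h6, h5⟩
        exact (haveI : Std.Symm (ChordRel (p := p)) := ⟨fun _ _ h => hsymm h⟩; List.Pairwise.forall hg.2 hcd hef hne.symm)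
      have hiff := Sep.notIff hrel.2.2.2.2.1
      have hsp2 := spL_ep hg.2 hef
      rcases hw with rfl | rfl
      · rw [hsp2.1]; exact hiff.symm
      · rw [hsp2.2]; exact hiff
    · rw [spL_not_ep hep]
  induction h with
  | rel u v huv => rw [huv, key u]
  | refl u => rfl
  | symm u v _ ih => exact ih.symm
  | trans u v w _ _ ih1 ih2 => exact ih1.trans ih2


theorem orbCount_rot : Nat.card (Quot (Rel (⇑(Equiv.addRight (1 : ZMod p))))) = 1 := by
  have : ∀ q q' : Quot (Rel (⇑(Equiv.addRight (1 : ZMod p)))), q = q' := by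
    intro q q'
    obtain ⟨x, rfl⟩ := Quot.exists_rep q
    obtain ⟨y, rfl⟩ := Quot.exists_rep q'
    exact mk_eq_iff.mpr (so_rot x y)
  haveI : Unique (Quot (Rel (⇑(Equiv.addRight (1 : ZMod p))))) :=
    ⟨⟨Quot.mk _ 0⟩, fun q => this q _⟩
  exact Nat.card_unique

/-- MASTER LEMMA: for a good family of chords, the complement boundary map has
`1 + length` orbits, and its orbits are the chord-diagram regions. -/
theorem master [Fact (1 < p)] (L : List (ZMod p × ZMod p)) (hg : Good L) :
    Nat.card (Quot (Rel (⇑(gL L)))) = 1 + L.length ∧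
    (∀ x y : ZMod p, ¬ isEp L x → ¬ isEp L y →
      (SO (⇑(gL L)) x y ↔ ∀ cd ∈ L, ¬ Sep cd.1 cd.2 x y)) := by
  induction L with
  | nil =>
      constructor
      · exact orbCount_rot
      · intro x y _ _
        simp only [List.not_mem_nil, false_implies, implies_true, iff_true]
        exact so_rot x y
  | cons ab L ih =>
      obtain ⟨hne, hpw⟩ := hg
      have hgL : Good L := ⟨fun cd h => hne cd (List.mem_cons_of_mem _ h),
        (List.pairwise_cons.mp hpw).2⟩
      have hhead := (List.pairwise_cons.mp hpw).1
      obtain ⟨ihc, ihso⟩ := ih hgL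
      have hab : ab.1 ≠ ab.2 := hne ab (List.mem_cons_self)
      -- a, b are not endpoints of L
      have hepa : ¬ isEp L ab.1 := by
        rintro ⟨ef, hef, h | h⟩
        · exact (hhead ef hef).1 h
        · exact (hhead ef hef).2.1 h
      have hepb : ¬ isEp L ab.2 := by
        rintro ⟨ef, hef, h | h⟩
        · exact (hhead ef hef).2.2.1 h
        · exact (hhead ef hef).2.2.2.1 h
      -- a and b are in the same orbit of gL L
      have hsoab : SO (⇑(gL L)) ab.1 ab.2 := by
        rw [ihso ab.1 ab.2 hepa hepb]
        intro cd hcd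
        exact (hhead cd hcd).2.2.2.2.2
      -- side invariance for the new boundary map
      have hgood' : Good (ab :: L) := ⟨hne, hpw⟩
      have hInv := fun (cd : ZMod p × ZMod p) (hcd : cd ∈ ab :: L) {x y : ZMod p}
        (h : SO (⇑(gL (ab :: L))) x y) => side_invariant hgood' hcd h
      -- a and b are separated in the new map
      have hnso : ¬ SO (⇑(gL (ab :: L))) ab.1 ab.2 := by
        intro h
        have := hInv ab (List.mem_cons_self) h
        rw [sd'_iff hab, sd'_iff hab, dst_self] at this
        have h2 : dst ab.1 ab.2 ≠ 0 := fun h' => hab.symm (dst_eq_zero_iff.mp h')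
        omega
      constructor
      · rw [gL_cons]
        rw [orbCount_split hab hsoab (by rw [← gL_cons]; exact hnso), ihc]
        simp [List.length_cons]
        omega
      · intro x y hx hy
        have hxL : ¬ isEp L x := fun ⟨ef, hef, h⟩ => hx ⟨ef, List.mem_cons_of_mem _ hef, h⟩
        have hyL : ¬ isEp L y := fun ⟨ef, hef, h⟩ => hy ⟨ef, List.mem_cons_of_mem _ hef, h⟩
        have hxa : x ≠ ab.1 := fun h => hx ⟨ab, List.mem_cons_self, Or.inl h⟩
        have hxb : x ≠ ab.2 := fun h => hx ⟨ab, List.mem_cons_self, Or.inr h⟩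
        have hya : y ≠ ab.1 := fun h => hy ⟨ab, List.mem_cons_self, Or.inl h⟩
        have hyb : y ≠ ab.2 := fun h => hy ⟨ab, List.mem_cons_self, Or.inr h⟩
        constructor
        · intro h
          intro cd hcd
          rcases List.mem_cons.mp hcd with h' | h'
          · subst h'
            have := hInv cd (List.mem_cons_self) h
            rw [sd'_of_ne' hxa hxb, sd'_of_ne' hya hyb] at this
            exact fun hsep => hsep this
          · -- use subset into old orbits then ihso
            have hsub : SO (⇑(gL L)) x y := by
              rw [gL_cons] at h
              exact so_swap_subset hsoab h
            exact (ihso x y hxL hyL).mp hsub cd h'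
        · intro h
          have hold : SO (⇑(gL L)) x y :=
            (ihso x y hxL hyL).mpr (fun cd hcd => h cd (List.mem_cons_of_mem _ hcd))
          rcases Classical.em (SO (⇑(gL L)) x ab.1) with hxA | hxA
          · -- x (and y) are in the orbit of a, b: use dichotomy and sides
            have hyA : SO (⇑(gL L)) y ab.1 := hold.symm.trans hxA
            have hdx := so_swap_dichotomy hsoab hxA.symm
            have hdy := so_swap_dichotomy hsoab hyA.symm
            rw [← gL_cons] at hdx hdy
            have hsdxy : sd ab.1 ab.2 x ↔ sd ab.1 ab.2 y :=
              Sep.notIff (h ab (List.mem_cons_self))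
            have hsda : ¬ sd' ab.1 ab.2 ab.1 := by simp [sd']
            have hsdb : sd' ab.1 ab.2 ab.2 := by simp [sd', hab.symm]
            have hmem := (List.mem_cons_self : ab ∈ ab :: L)
            have hsidex : ∀ {u : ZMod p}, u ≠ ab.1 → u ≠ ab.2 →
                SO (⇑(gL (ab :: L))) u ab.1 → ¬ sd ab.1 ab.2 u := by
              intro u hu1 hu2 hso hsd
              exact hsda (((hInv ab hmem hso).mp) ((sd'_of_ne' hu1 hu2).mpr hsd))
            have hsidey : ∀ {u : ZMod p}, u ≠ ab.1 → u ≠ ab.2 →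
                SO (⇑(gL (ab :: L))) u ab.2 → sd ab.1 ab.2 u := by
              intro u hu1 hu2 hso
              exact (sd'_of_ne' hu1 hu2).mp ((hInv ab hmem hso).mpr hsdb)
            rcases hdx with hx1 | hx2 <;> rcases hdy with hy1 | hy2
            · exact hx1.trans hy1.symm
            · exact absurd (hsdxy.mpr (hsidey hya hyb hy2))
                (hsidex hxa hxb hx1)
            · exact absurd (hsdxy.mp (hsidey hxa hxb hx2))
                (hsidex hya hyb hy1)
            · exact hx2.trans hy2.symm
          · rw [gL_cons]
            exact so_swap_outside hsoab hxA hold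

end Master

section ZModExtra
variable {p : ℕ} [NeZero p]

theorem add_one_iterate (m : ℕ) (x : ZMod p) : (fun z : ZMod p => z + 1)^[m] x = x + m := by
  induction m with
  | zero => simp
  | succ k ih =>
      rw [Function.iterate_succ_apply', ih]
      show x + ↑k + 1 = x + ↑(k + 1)
      push_cast; ring

theorem rb_rot_iff (a x b : ZMod p) :
    ReachesBefore (fun z : ZMod p => z + 1) a x b ↔ dst a x < dst a b := by
  constructor
  · rintro ⟨m, hm, hk⟩
    have hab : a ≠ b := by
      have := hk 0 (Nat.zero_le m)
      simpa using this
    have hAB : dst a b ≠ 0 := fun h => hab (dst_eq_zero_iff.mp h).symm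
    have hABp := dst_lt a b
    have hgt : m < dst a b := by
      by_contra hle
      refine hk (dst a b) (by omega) ?_
      rw [add_one_iterate, dst, ZMod.natCast_rightInverse (b - a)]
      ring
    have hx : dst a x = m := by
      rw [add_one_iterate] at hm
      rw [dst, ← hm]
      have : a + ↑m - a = (↑m : ZMod p) := by ring
      rw [this, ZMod.val_cast_of_lt (by omega)]
    omega
  · intro h
    refine ⟨dst a x, ?_, ?_⟩
    · rw [add_one_iterate, dst, ZMod.natCast_rightInverse (x - a)]
      ring
    · intro k hk heq
      rw [add_one_iterate] at heq
      have hkp : k < p := by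
        have := dst_lt a b
        omega
      have : dst a b = k := by
        rw [dst, ← heq]
        have h2 : a + ↑k - a = (↑k : ZMod p) := by ring
        rw [h2, ZMod.val_cast_of_lt hkp]
      omega

theorem dst_rev {a b : ZMod p} (hab : a ≠ b) : dst b a = p - dst a b := by
  have h := dst_add_dst a b a
  rw [dst_self] at h
  have h1 : dst a b ≠ 0 := fun h' => hab (dst_eq_zero_iff.mp h').symm
  have := dst_lt a b
  have := dst_lt b a
  omega

theorem sd_flip {a b x : ZMod p} (hab : a ≠ b) (hxa : x ≠ a) (hxb : x ≠ b) :
    sd b a x ↔ ¬ sd a b x := by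
  have hrev := dst_rev hab
  have h := dst_add_dst a b x
  have h1 : dst a b ≠ 0 := fun h' => hab (dst_eq_zero_iff.mp h').symm
  have h2 : dst a x ≠ 0 := fun h' => hxa (dst_eq_zero_iff.mp h')
  have h3 : dst a x ≠ dst a b := fun h' => hxb (dst_inj h')
  have h4 : dst b x ≠ 0 := fun h' => hxb (dst_eq_zero_iff.mp h')
  have := dst_lt a b
  have := dst_lt a x
  have := dst_lt b x
  simp only [sd]
  omega

theorem sep_orient {a b x y : ZMod p} (hab : a ≠ b) (hxa : x ≠ a) (hxb : x ≠ b)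
    (hya : y ≠ a) (hyb : y ≠ b) : Sep a b x y ↔ Sep b a x y := by
  have hx := sd_flip hab hxa hxb
  have hy := sd_flip hab hya hyb
  unfold Sep
  rw [hx, hy]
  tauto

theorem sep_symm {a b c d : ZMod p} (hab : a ≠ b) (hcd : c ≠ d) (hac : a ≠ c)
    (had : a ≠ d) (hbc : b ≠ c) (hbd : b ≠ d) : Sep a b c d ↔ Sep c d a b := by
  have hB : dst a b ≠ 0 := fun h' => hab (dst_eq_zero_iff.mp h').symm
  have hC : dst a c ≠ 0 := fun h' => hac (dst_eq_zero_iff.mp h').symm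
  have hD : dst a d ≠ 0 := fun h' => had (dst_eq_zero_iff.mp h').symm
  have hCD : dst a c ≠ dst a d := fun h' => hcd (dst_inj h')
  have hCB : dst a c ≠ dst a b := fun h' => hbc (dst_inj h').symm
  have hDB : dst a d ≠ dst a b := fun h' => hbd (dst_inj h').symm
  have hca : dst c a = p - dst a c := dst_rev hac
  have h1 := dst_add_dst a c d
  have h2 := dst_add_dst a c b
  have hcd0 : dst c d ≠ 0 := fun h' => hcd (dst_eq_zero_iff.mp h').symm
  have hcb0 : dst c b ≠ 0 := fun h' => hbc (dst_eq_zero_iff.mp h')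
  have := dst_lt a b
  have := dst_lt a c
  have := dst_lt a d
  have := dst_lt c d
  have := dst_lt c b
  have := dst_lt c a
  unfold Sep sd
  omega

theorem cc_rot_sep (a b c d : ZMod p) :
    ChordsCross (fun z : ZMod p => z + 1) a b c d ↔ Sep a b c d := by
  unfold ChordsCross Sep sd
  rw [rb_rot_iff, rb_rot_iff]

end ZModExtra


section Bridge
variable {α : Type*} {β : Type*}

theorem SO_congr (E : α ≃ β) {f : α → α} {h : β → β}
    (hc : ∀ x, E (f x) = h (E x)) {x y : α} : SO f x y ↔ SO h (E x) (E y) := by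
  constructor
  · intro hso
    induction hso with
    | rel u v huv =>
        subst huv
        have := SO.step h (E u)
        rwa [← hc u] at this
    | refl u => exact SO.refl _ _
    | symm u v _ ih => exact ih.symm
    | trans u v w _ _ ih1 ih2 => exact ih1.trans ih2
  · intro hso
    have hc' : ∀ w, E.symm (h w) = f (E.symm w) := by
      intro w
      conv_lhs => rw [← E.apply_symm_apply w, ← hc]
      rw [E.symm_apply_apply]
    have key : ∀ u v : β, SO h u v → SO f (E.symm u) (E.symm v) := by
      intro u v huv
      induction huv with
      | rel u v huv =>
          rw [huv, hc' u]
          exact SO.step f _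
      | refl u => exact SO.refl _ _
      | symm u v _ ih => exact ih.symm
      | trans u v w _ _ ih1 ih2 => exact ih1.trans ih2
    have := key _ _ hso
    simpa using this

theorem orbCount_congr (E : α ≃ β) {f : α → α} {h : β → β}
    (hc : ∀ x, E (f x) = h (E x)) :
    Nat.card (Quot (Rel f)) = Nat.card (Quot (Rel h)) := by
  refine Nat.card_congr (Quot.congr E ?_)
  intro a b
  constructor
  · rintro rfl; exact (hc a).symm ▸ rfl
  · intro hr
    have : E b = E (f a) := by rw [hc a]; exact hr
    exact E.injective this

theorem iterate_congr (E : α ≃ β) {f : α → α} {h : β → β}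
    (hc : ∀ x, E (f x) = h (E x)) (m : ℕ) (x : α) : h^[m] (E x) = E (f^[m] x) := by
  induction m with
  | zero => rfl
  | succ k ih =>
      rw [Function.iterate_succ_apply', Function.iterate_succ_apply', ih, hc]

theorem RB_congr (E : α ≃ β) {f : α → α} {h : β → β}
    (hc : ∀ x, E (f x) = h (E x)) (a x b : α) :
    ReachesBefore f a x b ↔ ReachesBefore h (E a) (E x) (E b) := by
  unfold ReachesBefore
  constructor
  · rintro ⟨m, hm, hk⟩
    refine ⟨m, by rw [iterate_congr E hc, hm], fun k hkm => ?_⟩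
    rw [iterate_congr E hc]
    exact fun hEq => hk k hkm (E.injective hEq)
  · rintro ⟨m, hm, hk⟩
    refine ⟨m, ?_, fun k hkm hEq => ?_⟩
    · apply E.injective
      rw [← iterate_congr E hc, hm]
    · exact hk k hkm (by rw [iterate_congr E hc, hEq])

theorem CC_congr (E : α ≃ β) {f : α → α} {h : β → β}
    (hc : ∀ x, E (f x) = h (E x)) (a b c d : α) :
    ChordsCross f a b c d ↔ ChordsCross h (E a) (E b) (E c) (E d) := by
  unfold ChordsCross
  rw [RB_congr E hc a c b, RB_congr E hc a d b]

variable [Fintype α] [DecidableEq α]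

/-- a single full cycle is conjugate to the cyclic rotation -/
theorem cycle_equiv [Nonempty α] (g : Equiv.Perm α) (hfull : ∀ x y, SO (⇑g) x y) :
    ∃ E : α ≃ ZMod (Fintype.card α), ∀ x, E (g x) = E x + 1 := by
  set N := Fintype.card α with hN
  haveI : NeZero N := ⟨by positivity⟩
  obtain ⟨x0⟩ := ‹Nonempty α›
  have hqid : ∀ z : α, g^[orderOf g] z = z := by
    intro z
    have : ⇑(g ^ orderOf g) z = z := by rw [pow_orderOf_eq_one]; rfl
    rwa [Equiv.Perm.coe_pow] at this
  have hex : ∃ q, 0 < q ∧ g^[q] x0 = x0 := ⟨orderOf g, orderOf_pos g, hqid x0⟩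
  obtain ⟨q, hq0, hqx, hmin⟩ : ∃ q, 0 < q ∧ g^[q] x0 = x0 ∧
      ∀ r, 0 < r → r < q → g^[r] x0 ≠ x0 := by
    refine ⟨Nat.find hex, (Nat.find_spec hex).1, (Nat.find_spec hex).2, ?_⟩
    intro r hr0 hrq hne
    exact Nat.find_min hex hrq ⟨hr0, hne⟩
  have hmod : ∀ m, g^[m] x0 = g^[m % q] x0 := by
    intro m
    induction m using Nat.strong_induction_on with
    | _ m ih =>
        rcases Nat.lt_or_ge m q with h | h
        · rw [Nat.mod_eq_of_lt h]
        · have h1 : m - q + q = m := Nat.sub_add_cancel h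
          have h2 : g^[m] x0 = g^[m - q] x0 := by
            conv_lhs => rw [← h1, Function.iterate_add_apply, hqx]
          rw [h2, ih (m - q) (by omega), Nat.mod_eq_sub_mod h]
  have hinjq : ∀ i, i < q → ∀ j, j < q → g^[i] x0 = g^[j] x0 → i = j := by
    have key : ∀ i j, i ≤ j → j < q → g^[i] x0 = g^[j] x0 → i = j := by
      intro i j hij hjq heq
      have h1 : g^[i] (g^[j - i] x0) = g^[i] x0 := by
        rw [← Function.iterate_add_apply]
        rw [show i + (j - i) = j by omega]
        exact heq.symm
      have h2 : g^[j - i] x0 = x0 := (Function.Injective.iterate g.injective i) h1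
      rcases Nat.eq_zero_or_pos (j - i) with h | h
      · omega
      · exact absurd h2 (hmin _ h (by omega))
    intro i hi j hj heq
    rcases Nat.le_total i j with h | h
    · exact key i j h hj heq
    · exact (key j i h hi heq.symm).symm
  have hsurj : ∀ x, ∃ m, m < q ∧ g^[m] x0 = x := by
    intro x
    obtain ⟨m, hm⟩ := exists_iterate_of_SO (hfull x0 x)
    exact ⟨m % q, Nat.mod_lt _ hq0, by rw [← hmod, hm]⟩
  -- q = N
  have hqN : q = N := by
    have hle : q ≤ N := by
      have : Function.Injective (fun i : Fin q => g^[i.1] x0) := by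
        intro i j hij
        exact Fin.ext (hinjq i.1 i.2 j.1 j.2 hij)
      simpa [hN] using Fintype.card_le_of_injective _ this
    have hge : N ≤ q := by
      have : Function.Surjective (fun i : Fin q => g^[i.1] x0) := by
        intro x
        obtain ⟨m, hmq, hm⟩ := hsurj x
        exact ⟨⟨m, hmq⟩, hm⟩
      simpa [hN] using Fintype.card_le_of_surjective _ this
    omega
  subst hqN
  set ψ : ZMod N → α := fun v => g^[v.val] x0 with hψ
  have hbij : Function.Bijective ψ := by
    constructor
    · intro v w hvw
      exact ZMod.val_injective N
        (hinjq v.val (ZMod.val_lt v) w.val (ZMod.val_lt w) hvw)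
    · intro x
      obtain ⟨m, hmq, hm⟩ := hsurj x
      refine ⟨(m : ZMod N), ?_⟩
      rw [hψ]
      simp only
      rw [ZMod.val_cast_of_lt (by omega)]
      exact hm
  refine ⟨(Equiv.ofBijective ψ hbij).symm, ?_⟩
  have hstep : ∀ v : ZMod N, ψ (v + 1) = g (ψ v) := by
    intro v
    have hval : (v + 1).val = (v.val + 1) % N := by
      rw [ZMod.val_add, ZMod.val_one_eq_one_mod]
      conv_rhs => rw [Nat.add_mod]
      simp [Nat.mod_mod_of_dvd]
    rw [hψ]
    simp only
    show (⇑g)^[(v + 1).val] x0 = g ((⇑g)^[v.val] x0)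
    rw [hval, ← hmod, Function.iterate_succ_apply']
  intro x
  apply (Equiv.ofBijective ψ hbij).injective
  show ψ ((Equiv.ofBijective ψ hbij).symm (g x)) = ψ ((Equiv.ofBijective ψ hbij).symm x + 1)
  rw [hstep]
  have h1 : ∀ z, ψ ((Equiv.ofBijective ψ hbij).symm z) = z := fun z =>
    (Equiv.ofBijective ψ hbij).apply_symm_apply z
  rw [h1, h1]

end Bridge

section Ribbon
variable {n : ℕ} (Γ : RibbonGraph n)

theorem s1s1 (i : Fin (2 * n)) : Γ.σ1 (Γ.σ1 i) = i := by
  have h : (Γ.σ1 * Γ.σ1) i = (1 : Equiv.Perm (Fin (2 * n))) i := by rw [Γ.invol]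
  simpa using h

theorem mem_closed {A : Finset (Fin (2 * n))} (hA : Γ.Closed A) (i : Fin (2 * n)) :
    i ∈ A ↔ Γ.σ1 i ∈ A :=
  ⟨fun h => hA i h, fun h => by have := hA _ h; rwa [s1s1] at this⟩

theorem bdry_perm (A : Finset (Fin (2 * n))) (hA : Γ.Closed A) :
    ∃ P : Equiv.Perm (Fin (2 * n)), ⇑P = Γ.bdryMap A := by
  classical
  have hinv : Function.Involutive (fun z => if z ∈ A then Γ.σ1 z else z) := by
    intro z
    by_cases hz : z ∈ A
    · simp [hz, hA z hz, s1s1]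
    · simp [hz]
  refine ⟨Γ.σ0 * Function.Involutive.toPerm _ hinv, ?_⟩
  funext z
  show Γ.σ0 (if z ∈ A then Γ.σ1 z else z) = Γ.bdryMap A z
  unfold RibbonGraph.bdryMap
  by_cases hz : z ∈ A <;> simp [hz]

theorem extract_pairs (T : Finset (Fin (2 * n))) (hTc : ∀ i ∈ T, Γ.σ1 i ∈ T) :
    ∃ l : List (Fin (2 * n) × Fin (2 * n)),
      (∀ cd ∈ l, cd.2 = Γ.σ1 cd.1) ∧
      (∀ z, z ∈ T ↔ isEpF l z) ∧
      l.Pairwise Disjp ∧ T.card = 2 * l.length := by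
  classical
  have main : ∀ m (T : Finset (Fin (2 * n))), T.card = m → (∀ i ∈ T, Γ.σ1 i ∈ T) →
      ∃ l : List (Fin (2 * n) × Fin (2 * n)),
        (∀ cd ∈ l, cd.2 = Γ.σ1 cd.1) ∧
        (∀ z, z ∈ T ↔ isEpF l z) ∧
        l.Pairwise Disjp ∧ T.card = 2 * l.length := by
    intro m
    induction m using Nat.strong_induction_on with
    | _ m ih =>
        intro T hcard hTc
        rcases Finset.eq_empty_or_nonempty T with rfl | ⟨i, hi⟩
        · exact ⟨[], by simp, fun z => by simp [isEpF], List.Pairwise.nil, by simp⟩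
        · have hs1i : Γ.σ1 i ∈ T := hTc i hi
          have hne : i ≠ Γ.σ1 i := (Γ.fixfree i).symm
          have hsub : ({i, Γ.σ1 i} : Finset (Fin (2 * n))) ⊆ T := by
            intro z hz
            rcases Finset.mem_insert.mp hz with rfl | hz
            · exact hi
            · rw [Finset.mem_singleton.mp hz]; exact hs1i
          set T' := T \ {i, Γ.σ1 i} with hT'
          have hcard' : T'.card = T.card - 2 := by
            rw [hT', Finset.card_sdiff_of_subset hsub, Finset.card_pair hne]
          have hTcard2 : 2 ≤ T.card := by
            calc 2 = ({i, Γ.σ1 i} : Finset (Fin (2 * n))).card := (Finset.card_pair hne).symm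
              _ ≤ T.card := Finset.card_le_card hsub
          have hT'c : ∀ z ∈ T', Γ.σ1 z ∈ T' := by
            intro z hz
            rw [hT', Finset.mem_sdiff] at hz ⊢
            obtain ⟨hzT, hzp⟩ := hz
            refine ⟨hTc z hzT, fun hmem => hzp ?_⟩
            rcases Finset.mem_insert.mp hmem with h | h
            · rw [Finset.mem_insert, Finset.mem_singleton]
              right
              rw [← s1s1 Γ z, h]
            · rw [Finset.mem_insert, Finset.mem_singleton]
              left
              exact Γ.σ1.injective (Finset.mem_singleton.mp h)
          obtain ⟨l', hl1, hl2, hl3, hl4⟩ :=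
            ih (m - 2) (by omega) T' (by omega) hT'c
          have hl'ep : ∀ z, isEpF l' z → z ∈ T' := fun z hz => (hl2 z).mpr hz
          refine ⟨(i, Γ.σ1 i) :: l', ?_, ?_, ?_, ?_⟩
          · intro cd hcd
            rcases List.mem_cons.mp hcd with rfl | hcd
            · rfl
            · exact hl1 cd hcd
          · intro z
            constructor
            · intro hz
              by_cases hzi : z = i
              · exact ⟨(i, Γ.σ1 i), List.mem_cons_self, Or.inl hzi⟩
              by_cases hzs : z = Γ.σ1 i
              · exact ⟨(i, Γ.σ1 i), List.mem_cons_self, Or.inr hzs⟩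
              · have : z ∈ T' := by
                  rw [hT', Finset.mem_sdiff]
                  refine ⟨hz, fun h => ?_⟩
                  rcases Finset.mem_insert.mp h with h | h
                  · exact hzi h
                  · exact hzs (Finset.mem_singleton.mp h)
                obtain ⟨cd, hcd, h⟩ := (hl2 z).mp this
                exact ⟨cd, List.mem_cons_of_mem _ hcd, h⟩
            · rintro ⟨cd, hcd, h⟩
              rcases List.mem_cons.mp hcd with rfl | hcd
              · rcases h with rfl | rfl
                · exact hi
                · exact hs1i
              · have : z ∈ T' := (hl2 z).mpr ⟨cd, hcd, h⟩
                exact (Finset.mem_sdiff.mp this).1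
          · refine List.pairwise_cons.mpr ⟨?_, hl3⟩
            intro cd hcd
            have h1 : cd.1 ∈ T' := hl'ep cd.1 ⟨cd, hcd, Or.inl rfl⟩
            have h2 : cd.2 ∈ T' := hl'ep cd.2 ⟨cd, hcd, Or.inr rfl⟩
            rw [hT', Finset.mem_sdiff] at h1 h2
            have hni : ∀ w : Fin (2 * n), w ∈ T' → w ≠ i ∧ w ≠ Γ.σ1 i := by
              intro w hw
              rw [hT', Finset.mem_sdiff] at hw
              constructor
              · intro h; exact hw.2 (by rw [h]; exact Finset.mem_insert_self _ _)
              · intro h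
                exact hw.2 (by rw [h]; exact Finset.mem_insert_of_mem (Finset.mem_singleton_self _))
            have hc1 := hni cd.1 (by rw [hT']; exact Finset.mem_sdiff.mpr h1)
            have hc2 := hni cd.2 (by rw [hT']; exact Finset.mem_sdiff.mpr h2)
            exact ⟨fun h => hc1.1 h.symm, fun h => hc2.1 h.symm,
              fun h => hc1.2 h.symm, fun h => hc2.2 h.symm⟩
          · have : T.card = T'.card + 2 := by omega
            rw [this, hl4]
            simp [List.length_cons]
            ring
  exact main T.card T rfl hTc

theorem ord_ne {i j : Fin (2 * n)} (h1 : i ≠ j) (h2 : i ≠ Γ.σ1 j) (h3 : Γ.σ1 i ≠ j)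
    (h4 : Γ.σ1 i ≠ Γ.σ1 j) : Γ.edgeOrd i ≠ Γ.edgeOrd j := by
  unfold RibbonGraph.edgeOrd
  have e1 : i.1 ≠ j.1 := fun h => h1 (Fin.ext h)
  have e2 : i.1 ≠ (Γ.σ1 j).1 := fun h => h2 (Fin.ext h)
  have e3 : (Γ.σ1 i).1 ≠ j.1 := fun h => h3 (Fin.ext h)
  have e4 : (Γ.σ1 i).1 ≠ (Γ.σ1 j).1 := fun h => h4 (Fin.ext h)
  omega


theorem live_sigma1 {A : Finset (Fin (2 * n))} (hA : Γ.IsQuasiTree A) :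
    ∀ i, Γ.Live A i → Γ.Live A (Γ.σ1 i) := by
  classical
  obtain ⟨hAc, hk1, hf1⟩ := hA
  obtain ⟨P, hP⟩ := bdry_perm Γ A hAc
  have hforb : Γ.faces A = Nat.card (Quot (Rel (Γ.bdryMap A))) := rfl
  have hcard1 : Nat.card (Quot (Rel (Γ.bdryMap A))) = 1 := by rw [← hforb, hf1]
  obtain ⟨hsub, hnonq⟩ := Nat.card_eq_one_iff_unique.mp hcard1
  have hne : Nonempty (Fin (2 * n)) := by
    obtain ⟨q⟩ := hnonq
    obtain ⟨x, _⟩ := Quot.exists_rep q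
    exact ⟨x⟩
  set p := Fintype.card (Fin (2 * n)) with hpdef
  have hpval : p = 2 * n := by rw [hpdef, Fintype.card_fin]
  have hppos : 0 < p := Fintype.card_pos
  haveI : NeZero p := ⟨by omega⟩
  have hfullP : ∀ x y : Fin (2 * n), SO (⇑P) x y := by
    rw [hP]
    intro x y
    exact mk_eq_iff.mp (Subsingleton.elim _ _)
  obtain ⟨E, hEP⟩ := cycle_equiv P hfullP
  have hE : ∀ x, E (Γ.bdryMap A x) = E x + 1 := by
    intro x
    rw [← hP]
    exact hEP x
  have hCC : ∀ i j, Γ.Crosses A i j ↔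
      Sep (E i) (E (Γ.σ1 i)) (E j) (E (Γ.σ1 j)) := by
    intro i j
    unfold RibbonGraph.Crosses
    rw [CC_congr E (h := fun w => w + 1) hE, cc_rot_sep]
  intro i hlive j hj
  have hordi : Γ.edgeOrd (Γ.σ1 i) = Γ.edgeOrd i := by
    unfold RibbonGraph.edgeOrd
    rw [s1s1]
    exact Nat.min_comm _ _
  rw [hordi] at hj
  have hnc := hlive j hj
  -- distinctness
  have hji : j ≠ i := fun h => by rw [h] at hj; omega
  have hjs : j ≠ Γ.σ1 i := fun h => by
    rw [h, hordi] at hj; omega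
  have hsji : Γ.σ1 j ≠ i := fun h => hjs (by rw [← h, s1s1])
  have hsjs : Γ.σ1 j ≠ Γ.σ1 i := fun h => hji (Γ.σ1.injective h)
  rw [hCC] at hnc ⊢
  rw [s1s1]
  rw [sep_orient (E.injective.ne (Γ.fixfree i).symm) (E.injective.ne hji)
    (E.injective.ne hjs) (E.injective.ne hsji) (E.injective.ne hsjs)] at hnc
  exact hnc

theorem faces_sdiff {A : Finset (Fin (2 * n))} (hA : Γ.IsQuasiTree A)
    (T : Finset (Fin (2 * n))) (hTA : T ⊆ A) (hTc : ∀ i ∈ T, Γ.σ1 i ∈ T)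
    (hTlive : ∀ i ∈ T, Γ.Live A i) :
    2 ∣ T.card ∧ Γ.faces (A \ T) = 1 + T.card / 2 := by
  classical
  obtain ⟨hAc, hk1, hf1⟩ := hA
  obtain ⟨P, hP⟩ := bdry_perm Γ A hAc
  have hforb : Γ.faces A = Nat.card (Quot (Rel (Γ.bdryMap A))) := rfl
  have hcard1 : Nat.card (Quot (Rel (Γ.bdryMap A))) = 1 := by rw [← hforb, hf1]
  obtain ⟨hsub, hnonq⟩ := Nat.card_eq_one_iff_unique.mp hcard1
  have hne : Nonempty (Fin (2 * n)) := by
    obtain ⟨q⟩ := hnonq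
    obtain ⟨x, _⟩ := Quot.exists_rep q
    exact ⟨x⟩
  have hfull : ∀ x y : Fin (2 * n), SO (Γ.bdryMap A) x y := by
    intro x y
    exact mk_eq_iff.mp (Subsingleton.elim _ _)
  set p := Fintype.card (Fin (2 * n)) with hpdef
  have hpval : p = 2 * n := by rw [hpdef, Fintype.card_fin]
  have hppos : 0 < p := Fintype.card_pos
  have hp2 : 1 < p := by omega
  haveI : NeZero p := ⟨by omega⟩
  haveI : Fact (1 < p) := ⟨hp2⟩
  have hfullP : ∀ x y : Fin (2 * n), SO (⇑P) x y := by rw [hP]; exact hfull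
  obtain ⟨E, hEP⟩ := cycle_equiv P hfullP
  have hE : ∀ x, E (Γ.bdryMap A x) = E x + 1 := by
    intro x
    rw [← hP]
    exact hEP x
  -- crossing bridge
  have hCC : ∀ i j, Γ.Crosses A i j ↔
      Sep (E i) (E (Γ.σ1 i)) (E j) (E (Γ.σ1 j)) := by
    intro i j
    unfold RibbonGraph.Crosses
    rw [CC_congr E (h := fun w => w + 1) hE, cc_rot_sep]
  -- non-crossing of live chords
  have hnc : ∀ i j : Fin (2 * n), Γ.Live A i → Γ.Live A j → i ≠ j → i ≠ Γ.σ1 j →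
      Γ.σ1 i ≠ j → Γ.σ1 i ≠ Γ.σ1 j →
      ¬ Sep (E i) (E (Γ.σ1 i)) (E j) (E (Γ.σ1 j)) := by
    intro i j hLi hLj h1 h2 h3 h4
    have hord := ord_ne Γ h1 h2 h3 h4
    rcases Nat.lt_or_ge (Γ.edgeOrd j) (Γ.edgeOrd i) with hlt | hge
    · exact (hCC i j).not.mp (hLi j hlt)
    · have hlt : Γ.edgeOrd i < Γ.edgeOrd j := by omega
      have := (hCC j i).not.mp (hLj i hlt)
      rw [sep_symm (E.injective.ne (Γ.fixfree j).symm) (E.injective.ne (Γ.fixfree i).symm)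
        (E.injective.ne (fun h => h1 h.symm)) (E.injective.ne h3.symm)
        (E.injective.ne h2.symm) (E.injective.ne (fun h => h4 h.symm))] at this
      exact this
  -- the chord list
  obtain ⟨l, hlpair, hlmem, hldisj, hlcard⟩ := extract_pairs Γ T hTc
  set Lm := l.map (fun cd => (E cd.1, E cd.2)) with hLm
  have hepT : ∀ cd ∈ l, cd.1 ∈ T ∧ cd.2 ∈ T := by
    intro cd hcd
    exact ⟨(hlmem cd.1).mpr ⟨cd, hcd, Or.inl rfl⟩, (hlmem cd.2).mpr ⟨cd, hcd, Or.inr rfl⟩⟩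
  have hGood : Good Lm := by
    constructor
    · intro cd hcd
      rw [hLm] at hcd
      obtain ⟨ef, hef, rfl⟩ := List.mem_map.mp hcd
      have := hlpair ef hef
      exact E.injective.ne (fun h => (Γ.fixfree ef.1) (by rw [← this, h]))
    · rw [hLm, List.pairwise_map]
      refine List.Pairwise.imp_of_mem ?_ hldisj
      intro cd ef hcd hef hdisj
      have hcd2 := hlpair cd hcd
      have hef2 := hlpair ef hef
      have hL1 : Γ.Live A cd.1 := hTlive _ (hepT cd hcd).1
      have hL2 : Γ.Live A ef.1 := hTlive _ (hepT ef hef).1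
      refine ⟨E.injective.ne hdisj.1, E.injective.ne hdisj.2.1,
        E.injective.ne hdisj.2.2.1, E.injective.ne hdisj.2.2.2, ?_, ?_⟩
      · have := hnc cd.1 ef.1 hL1 hL2 hdisj.1 (by rw [← hef2]; exact hdisj.2.1)
          (by rw [← hcd2]; exact hdisj.2.2.1) (by rw [← hcd2, ← hef2]; exact hdisj.2.2.2)
        rw [hcd2, hef2]
        exact this
      · have := hnc ef.1 cd.1 hL2 hL1 (fun h => hdisj.1 h.symm)
          (by rw [← hcd2]; exact fun h => hdisj.2.2.1 h.symm)
          (by rw [← hef2]; exact fun h => hdisj.2.1 h.symm)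
          (by rw [← hcd2, ← hef2]; exact fun h => hdisj.2.2.2 h.symm)
        rw [hcd2, hef2]
        exact this
  -- boundary map formula
  have hspF : ∀ z, spF l z = if z ∈ T then Γ.σ1 z else z := by
    intro z
    by_cases hz : z ∈ T
    · rw [if_pos hz]
      obtain ⟨cd, hcd, h | h⟩ := (hlmem z).mp hz
      · subst h
        rw [(spF_ep hldisj hcd).1, hlpair cd hcd]
      · subst h
        rw [(spF_ep hldisj hcd).2, hlpair cd hcd, s1s1]
    · rw [if_neg hz]
      exact spF_not_ep (fun h => hz ((hlmem z).mpr h))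
  have hbd : ∀ z, Γ.bdryMap (A \ T) z = Γ.bdryMap A (spF l z) := by
    intro z
    rw [hspF]
    unfold RibbonGraph.bdryMap
    by_cases hz : z ∈ T
    · have hzA : z ∈ A := hTA hz
      have hzAT : z ∉ A \ T := by simp [hz]
      have hs1A : Γ.σ1 z ∈ A := hAc z hzA
      rw [if_pos hz, if_neg hzAT, if_pos hs1A, s1s1]
    · by_cases hzA : z ∈ A
      · have hzAT : z ∈ A \ T := Finset.mem_sdiff.mpr ⟨hzA, hz⟩
        rw [if_neg hz, if_pos hzAT, if_pos hzA]
      · have hzAT : z ∉ A \ T := fun h => hzA (Finset.mem_sdiff.mp h).1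
        rw [if_neg hz, if_neg hzAT, if_neg hzA]
  have hconj : ∀ z, E (Γ.bdryMap (A \ T) z) = (⇑(gL Lm)) (E z) := by
    intro z
    rw [hbd z, hE, spF_map E l z]
    rfl
  have hfaces : Γ.faces (A \ T) = Nat.card (Quot (Rel (⇑(gL Lm)))) :=
    orbCount_congr E hconj
  have hmaster := (master Lm hGood).1
  have hlen : Lm.length = l.length := by rw [hLm, List.length_map]
  constructor
  · exact ⟨l.length, hlcard⟩
  · rw [hfaces, hmaster, hlen]
    omega

end Ribbon

end St10

/-- For a quasi-tree `A` with internally dead subgraph `D = deadIn A`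
and a set `S1` of internally live edges, let `W` be the corresponding spanning
subgraph of `G_A`, so that its nullity is `n(W) = k(D ∪ S1) + e(S1) - k(D)`.
Then `n(D ∪ S1) = n(D) + n(W)` and `g(D ∪ S1) = g(D) + n(W)`. -/
theorem stmt10 {n : ℕ} (Γ : RibbonGraph n) (hΓ : Γ.Connected)
    (A : Finset (Fin (2 * n))) (hA : Γ.IsQuasiTree A)
    (S1 : Finset (Fin (2 * n)))
    (hS1 : ∀ i ∈ S1, i ∈ A ∧ Γ.Live A i) (hS1c : Γ.Closed S1)
    (nW : ℤ)
    (hnW : nW = (Γ.kComp (Γ.deadIn A ∪ S1) : ℤ) + (Γ.eCount S1 : ℤ) - (Γ.kComp (Γ.deadIn A) : ℤ)) :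
    Γ.nullity (Γ.deadIn A ∪ S1) = Γ.nullity (Γ.deadIn A) + nW ∧
    Γ.twoGenus (Γ.deadIn A ∪ S1) = Γ.twoGenus (Γ.deadIn A) + 2 * nW := by
  classical
  open St10 in
  set D := Γ.deadIn A with hD
  set Tall := A.filter (fun i => Γ.Live A i) with hTallDef
  set TS := Tall \ S1 with hTSDef
  have hAc : Γ.Closed A := hA.1
  have hlive_cl := St10.live_sigma1 Γ hA
  have hS1sub : S1 ⊆ Tall := fun i hi =>
    Finset.mem_filter.mpr ⟨(hS1 i hi).1, (hS1 i hi).2⟩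
  have hDeq : D = A \ Tall := by
    ext z
    simp only [hD, hTallDef, RibbonGraph.deadIn, Finset.mem_filter, Finset.mem_sdiff]
    tauto
  have hDSeq : D ∪ S1 = A \ TS := by
    ext z
    have hz := hS1 z
    simp only [hD, hTSDef, hTallDef, RibbonGraph.deadIn, Finset.mem_union,
      Finset.mem_filter, Finset.mem_sdiff]
    by_cases hzS : z ∈ S1
    · have := hz hzS
      tauto
    · tauto
  have hTallc : ∀ i ∈ Tall, Γ.σ1 i ∈ Tall := by
    intro i hi
    rw [hTallDef, Finset.mem_filter] at hi ⊢
    exact ⟨hAc i hi.1, hlive_cl i hi.2⟩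
  have hTSc : ∀ i ∈ TS, Γ.σ1 i ∈ TS := by
    intro i hi
    rw [hTSDef, Finset.mem_sdiff] at hi ⊢
    refine ⟨hTallc i hi.1, fun h => hi.2 ?_⟩
    have := hS1c _ h
    rwa [St10.s1s1] at this
  have hTalllive : ∀ i ∈ Tall, Γ.Live A i := fun i hi => (Finset.mem_filter.mp hi).2
  have hTallsub : Tall ⊆ A := Finset.filter_subset _ _
  have hTSsub : TS ⊆ A := fun i hi => hTallsub ((Finset.mem_sdiff.mp hi).1)
  obtain ⟨hTalleven, hfD⟩ := St10.faces_sdiff Γ hA Tall hTallsub hTallc hTalllive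
  obtain ⟨hTSeven, hfDS⟩ := St10.faces_sdiff Γ hA TS hTSsub hTSc
    (fun i hi => hTalllive i ((Finset.mem_sdiff.mp hi).1))
  have hcardTS : TS.card = Tall.card - S1.card := Finset.card_sdiff_of_subset hS1sub
  have hScard : S1.card ≤ Tall.card := Finset.card_le_card hS1sub
  have hS1even : 2 ∣ S1.card := by
    obtain ⟨l, -, -, -, h⟩ := St10.extract_pairs Γ S1 hS1c
    exact ⟨l.length, h⟩
  have hDc : ∀ i ∈ D, Γ.σ1 i ∈ D := by
    intro i hi
    rw [hD, RibbonGraph.deadIn, Finset.mem_filter] at hi ⊢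
    refine ⟨hAc i hi.1, fun h => hi.2 ?_⟩
    have := hlive_cl _ h
    rwa [St10.s1s1] at this
  have hDeven : 2 ∣ D.card := by
    obtain ⟨l, -, -, -, h⟩ := St10.extract_pairs Γ D hDc
    exact ⟨l.length, h⟩
  have hdisj : Disjoint D S1 := by
    rw [Finset.disjoint_left]
    intro z hz hzS
    rw [hD, RibbonGraph.deadIn, Finset.mem_filter] at hz
    exact hz.2 (hS1 z hzS).2
  have hcup : (D ∪ S1).card = D.card + S1.card := Finset.card_union_of_disjoint hdisj
  have he : Γ.eCount (D ∪ S1) = Γ.eCount D + Γ.eCount S1 := by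
    unfold RibbonGraph.eCount
    rw [hcup]
    omega
  have hfD' : Γ.faces D = 1 + Tall.card / 2 := by rw [hDeq]; exact hfD
  have hfDS' : Γ.faces (D ∪ S1) = 1 + TS.card / 2 := by rw [hDSeq]; exact hfDS
  have hkey : Γ.faces D = Γ.faces (D ∪ S1) + Γ.eCount S1 := by
    rw [hfD', hfDS', hcardTS]
    unfold RibbonGraph.eCount
    omega
  constructor
  · unfold RibbonGraph.nullity
    rw [hnW, he]
    push_cast
    ring
  · unfold RibbonGraph.twoGenus
    rw [hnW, he, hkey]
    push_cast
    ring
end
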